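/- arXiv:2306.03685 — 11 statements merged into one kernel-verified Lean document; each statement's English description precedes it below -/
import Mathlib

section
/- The permutation π of Z_n defined by π((αd_k+i)s+j) = jk - i - αd_sd_k (where 0 ≤ j < d_s, 0 ≤ i < d_k, 0 ≤ α < n/(d_sd_k), and every x ∈ Z_n has a unique such representation) is injective, i.e., a bijection of Z_n. -/
/-- The circular (Lee) distance between two elements of `ZMod n`. -/
def circDist (n : ℕ) (i j : ZMod n) : ℕ := min (i - j).val (j - i).val

/-- A permutation of `ZMod n` is `(s,k)`-clash-free if it moves every pair of
distinct elements at distance less than `s` to a pair at distance at least `k`. -/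
def ClashFree (n s k : ℕ) (π : Equiv.Perm (ZMod n)) : Prop :=
  ∀ i j : ZMod n, i ≠ j → circDist n i j < s → k ≤ circDist n (π i) (π j)

lemma aux_dvd (n s : ℕ) (hn : 0 < n) (w : ℤ) (h : (n:ℤ) ∣ w * s) :
    ((n / Nat.gcd n s : ℕ) : ℤ) ∣ w := by
  set d := Nat.gcd n s with hd
  have hd0 : 0 < d := Nat.gcd_pos_of_pos_left s hn
  have hcop : Nat.Coprime (n / d) (s / d) := Nat.coprime_div_gcd_div_gcd hd0
  have hnd : ((n / d : ℕ):ℤ) * d = n := by exact_mod_cast Nat.div_mul_cancel (Nat.gcd_dvd_left n s)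
  have hsd : ((s / d : ℕ):ℤ) * d = s := by exact_mod_cast Nat.div_mul_cancel (Nat.gcd_dvd_right n s)
  have h2 : ((n / d : ℕ):ℤ) * d ∣ (w * (s / d : ℕ)) * d := by
    rw [hnd]
    calc (n:ℤ) ∣ w * s := h
    _ = (w * (s / d : ℕ)) * d := by rw [← hsd]; ring
  have h3 : ((n / d : ℕ):ℤ) ∣ w * (s / d : ℕ) :=
    (mul_dvd_mul_iff_right (by exact_mod_cast hd0.ne' : (d:ℤ) ≠ 0)).mp h2
  exact hcop.isCoprime.dvd_of_dvd_mul_right h3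

lemma aux_eq {d a b : ℕ} (ha : a < d) (hb : b < d) (h : (d:ℤ) ∣ (a:ℤ) - b) : a = b := by
  have h2 : ((a:ℤ) - b) = 0 :=
    Int.eq_zero_of_abs_lt_dvd h (abs_lt.mpr ⟨by omega, by omega⟩)
  omega

/-- The map `(α d_k + i) s + j ↦ j k - i - α d_s d_k` is a bijection of `ZMod n`. -/
theorem stmt_0 (n k s r : ℕ) (hk : 0 < k) (hkn : k < n)
    (hs : s = (n - 1) / k) (hn : n = s * k + r) (hr1 : 1 ≤ r)
    (hrk : r < k) (hrs : r < s)
    (hdvd : Nat.gcd n s * Nat.gcd n k ∣ n) :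
    ∃ π : Equiv.Perm (ZMod n),
      ∀ α i j : ℕ,
        α < n / (Nat.gcd n s * Nat.gcd n k) →
        i < Nat.gcd n k → j < Nat.gcd n s →
        π (((α * Nat.gcd n k + i) * s + j : ℕ) : ZMod n)
          = ((j * k : ℕ) : ZMod n) - (i : ZMod n)
            - ((α * (Nat.gcd n s * Nat.gcd n k) : ℕ) : ZMod n) := by
  have hn0 : 0 < n := by omega
  set dk := Nat.gcd n k with hdk
  set ds := Nat.gcd n s with hds
  set N := n / (ds * dk) with hNdef
  have hdk0 : 0 < dk := Nat.gcd_pos_of_pos_left k hn0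
  have hds0 : 0 < ds := Nat.gcd_pos_of_pos_left s hn0
  have hN : N * (ds * dk) = n := Nat.div_mul_cancel hdvd
  haveI : NeZero n := ⟨hn0.ne'⟩
  have hds_n : (ds:ℤ) ∣ n := Int.natCast_dvd_natCast.mpr (Nat.gcd_dvd_left n s)
  have hds_s : (ds:ℤ) ∣ s := Int.natCast_dvd_natCast.mpr (Nat.gcd_dvd_right n s)
  have hdk_n : (dk:ℤ) ∣ n := Int.natCast_dvd_natCast.mpr (Nat.gcd_dvd_left n k)
  have hdk_k : (dk:ℤ) ∣ k := Int.natCast_dvd_natCast.mpr (Nat.gcd_dvd_right n k)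
  have hnds : n / ds = N * dk := Nat.div_eq_of_eq_mul_left hds0 (by rw [← hN]; ring)
  have hndk : n / dk = N * ds := Nat.div_eq_of_eq_mul_left hdk0 (by rw [← hN]; ring)
  set g : Fin N × Fin dk × Fin ds → ZMod n :=
    fun x => (((x.1 * dk + x.2.1) * s + x.2.2 : ℕ) : ZMod n) with hg_def
  set f : Fin N × Fin dk × Fin ds → ZMod n :=
    fun x => ((x.2.2 * k : ℕ) : ZMod n) - ((x.2.1 : ℕ) : ZMod n)
      - ((x.1 * (ds * dk) : ℕ) : ZMod n) with hf_def
  have hcard : Fintype.card (Fin N × Fin dk × Fin ds) = Fintype.card (ZMod n) := by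
    simp only [Fintype.card_prod, Fintype.card_fin, ZMod.card]
    rw [← hN]; ring
  -- injectivity of g
  have hg_inj : Function.Injective g := by
    rintro ⟨⟨α, hα⟩, ⟨i, hi⟩, ⟨j, hj⟩⟩ ⟨⟨α', hα'⟩, ⟨i', hi'⟩, ⟨j', hj'⟩⟩ he
    simp only [hg_def] at he
    have e : (n:ℤ) ∣ (((α':ℤ) * dk + i') * s + j') - (((α:ℤ) * dk + i) * s + j) := by
      have h1 := (Nat.modEq_iff_dvd (n := n)).mp ((ZMod.natCast_eq_natCast_iff _ _ _).mp he)
      push_cast at h1 ⊢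
      convert h1 using 1
    have e1 : (ds:ℤ) ∣ (j':ℤ) - j := by
      have h1 : (ds:ℤ) ∣ ((α':ℤ) * dk + i' - ((α:ℤ) * dk + i)) * s := hds_s.mul_left _
      have h3 : (j':ℤ) - j = ((((α':ℤ) * dk + i') * s + j') - (((α:ℤ) * dk + i) * s + j))
          - ((α':ℤ) * dk + i' - ((α:ℤ) * dk + i)) * s := by ring
      rw [h3]; exact dvd_sub (hds_n.trans e) h1
    have hjj : j' = j := aux_eq hj' hj e1
    subst hjj
    have e2 : (n:ℤ) ∣ (((α':ℤ) * dk + i') - ((α:ℤ) * dk + i)) * s := by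
      have h3 : (((α':ℤ) * dk + i') - ((α:ℤ) * dk + i)) * s
          = (((α':ℤ) * dk + i') * s + j') - (((α:ℤ) * dk + i) * s + j') := by ring
      rw [h3]; exact e
    have e3 : ((N:ℤ) * dk) ∣ ((α':ℤ) * dk + i') - ((α:ℤ) * dk + i) := by
      have h4 := aux_dvd n s hn0 _ e2
      rw [← hds, hnds] at h4
      exact_mod_cast h4
    have e4 : (dk:ℤ) ∣ (i':ℤ) - i := by
      have hdkN : (dk:ℤ) ∣ (N:ℤ) * dk := (dvd_refl _).mul_left _
      have h5 : (i':ℤ) - i = (((α':ℤ) * dk + i') - ((α:ℤ) * dk + i))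
          - ((α':ℤ) - α) * dk := by ring
      rw [h5]; exact dvd_sub (hdkN.trans e3) ((dvd_refl _).mul_left _)
    have hii : i' = i := aux_eq hi' hi e4
    subst hii
    have e5 : ((N:ℤ) * dk) ∣ ((α':ℤ) - α) * dk := by
      have h6 : ((α':ℤ) - α) * dk = ((α':ℤ) * dk + i') - ((α:ℤ) * dk + i') := by ring
      rw [h6]; exact e3
    have e6 : (N:ℤ) ∣ (α':ℤ) - α :=
      (mul_dvd_mul_iff_right (by exact_mod_cast hdk0.ne' : (dk:ℤ) ≠ 0)).mp e5
    have : α' = α := aux_eq hα' hα e6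
    subst this
    rfl
  -- injectivity of f
  have hf_inj : Function.Injective f := by
    rintro ⟨⟨α, hα⟩, ⟨i, hi⟩, ⟨j, hj⟩⟩ ⟨⟨α', hα'⟩, ⟨i', hi'⟩, ⟨j', hj'⟩⟩ he
    simp only [hf_def] at he
    have e : (n:ℤ) ∣ ((j':ℤ) * k - i' - (α':ℤ) * (ds * dk))
        - ((j:ℤ) * k - i - (α:ℤ) * (ds * dk)) := by
      have h1 : ((((j:ℤ) * k - i - (α:ℤ) * (ds * dk)) : ℤ) : ZMod n)
          = ((((j':ℤ) * k - i' - (α':ℤ) * (ds * dk)) : ℤ) : ZMod n) := by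
        push_cast
        push_cast at he
        linear_combination he
      exact ((ZMod.intCast_eq_intCast_iff _ _ _).mp h1).dvd
    have e1 : (dk:ℤ) ∣ (i:ℤ) - i' := by
      have h2 : (i:ℤ) - i' = (((j':ℤ) * k - i' - (α':ℤ) * (ds * dk))
          - ((j:ℤ) * k - i - (α:ℤ) * (ds * dk)))
          - ((j':ℤ) - j) * k + ((α':ℤ) - α) * (ds * dk) := by ring
      have h3 : (dk:ℤ) ∣ ((α':ℤ) - α) * (ds * dk) := ((dvd_refl _).mul_left _).mul_left _
      rw [h2]
      exact dvd_add (dvd_sub (hdk_n.trans e) (hdk_k.mul_left _)) h3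
    have hii : i = i' := aux_eq hi hi' e1
    subst hii
    have e2 : (n:ℤ) ∣ ((j':ℤ) - j) * k - ((α':ℤ) - α) * (ds * dk) := by
      have h3 : ((j':ℤ) - j) * k - ((α':ℤ) - α) * (ds * dk)
          = ((j':ℤ) * k - i - (α':ℤ) * (ds * dk)) - ((j:ℤ) * k - i - (α:ℤ) * (ds * dk)) := by
        ring
      rw [h3]; exact e
    have hdsdk_n : ((ds:ℤ) * dk) ∣ (n:ℤ) := by exact_mod_cast Int.natCast_dvd_natCast.mpr hdvd
    have e3 : ((ds:ℤ) * dk) ∣ ((j':ℤ) - j) * k := by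
      have h4 : ((j':ℤ) - j) * k = (((j':ℤ) - j) * k - ((α':ℤ) - α) * (ds * dk))
          + ((α':ℤ) - α) * (ds * dk) := by ring
      rw [h4]
      exact dvd_add (hdsdk_n.trans e2) (((dvd_refl _).mul_left _))
    obtain ⟨k', hk'⟩ : dk ∣ k := Nat.gcd_dvd_right n k
    have hkdk : k / dk = k' := by rw [hk', Nat.mul_div_cancel_left _ hdk0]
    have hcop : Nat.Coprime ds k' := by
      have hc1 : Nat.Coprime (n / dk) (k / dk) := Nat.coprime_div_gcd_div_gcd hdk0
      rw [hkdk] at hc1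
      exact Nat.Coprime.coprime_dvd_left ⟨N, by rw [hndk]; ring⟩ hc1
    have e4 : (ds:ℤ) ∣ ((j':ℤ) - j) * k' := by
      have h5 : ((ds:ℤ) * dk) ∣ (((j':ℤ) - j) * k') * dk := by
        have h6 : (((j':ℤ) - j) * k') * dk = ((j':ℤ) - j) * k := by rw [hk']; push_cast; ring
        rw [h6]; exact e3
      exact (mul_dvd_mul_iff_right (by exact_mod_cast hdk0.ne' : (dk:ℤ) ≠ 0)).mp h5
    have e5 : (ds:ℤ) ∣ (j':ℤ) - j := hcop.isCoprime.dvd_of_dvd_mul_right e4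
    have hjj : j' = j := aux_eq hj' hj e5
    subst hjj
    have e6 : ((N:ℤ) * (ds * dk)) ∣ ((α':ℤ) - α) * (ds * dk) := by
      have h7 : ((N:ℤ) * (ds * dk)) = (n:ℤ) := by exact_mod_cast congrArg (Nat.cast : ℕ → ℤ) hN
      rw [h7]
      have h8 : ((α':ℤ) - α) * (ds * dk)
          = -(((j':ℤ) - j') * k - ((α':ℤ) - α) * (ds * dk)) := by ring
      rw [h8]; exact (e2).neg_right
    have e7 : (N:ℤ) ∣ (α':ℤ) - α := by
      have hdsdk0 : ((ds:ℤ) * dk) ≠ 0 := by positivity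
      exact (mul_dvd_mul_iff_right hdsdk0).mp e6
    have : α' = α := aux_eq hα' hα e7
    subst this
    rfl
  have hg_bij : Function.Bijective g :=
    (Fintype.bijective_iff_injective_and_card g).mpr ⟨hg_inj, hcard⟩
  have hf_bij : Function.Bijective f :=
    (Fintype.bijective_iff_injective_and_card f).mpr ⟨hf_inj, hcard⟩
  refine ⟨(Equiv.ofBijective g hg_bij).symm.trans (Equiv.ofBijective f hf_bij), ?_⟩
  intro α i j hα hi hj
  have key : ∀ x : Fin N × Fin dk × Fin ds,
      ((Equiv.ofBijective g hg_bij).symm.trans (Equiv.ofBijective f hf_bij)) (g x) = f x := by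
    intro x
    have : (Equiv.ofBijective g hg_bij).symm (g x) = x :=
      (Equiv.ofBijective g hg_bij).symm_apply_apply x
    simp only [Equiv.trans_apply, this]
    rfl
  exact key ⟨⟨α, hα⟩, ⟨i, hi⟩, ⟨j, hj⟩⟩
end

section
/- Every x ∈ Z_n has a unique representation x = (αd_k + i)s + j mod n with j ∈ {0,...,d_s-1}, i ∈ {0,...,d_k-1}, and α ∈ {0,...,n/(d_sd_k)-1}. -/
lemma aux_inj (n s ds dk A : ℕ) (hds0 : 0 < ds) (hdk0 : 0 < dk)
    (hdss : ds ∣ s) (hneq : ds * dk * A = n)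
    (hcop : Nat.Coprime (n / ds) (s / ds))
    (α i j α' i' j' : ℕ) (hα : α < A) (hi : i < dk) (hj : j < ds)
    (hα' : α' < A) (hi' : i' < dk) (hj' : j' < ds)
    (h : (n:ℤ) ∣ (((α:ℤ)*dk+i)*s+j) - (((α':ℤ)*dk+i')*s+j')) :
    α = α' ∧ i = i' ∧ j = j' := by
  obtain ⟨s', hs'⟩ := hdss
  have hnz : (n:ℤ) = (ds:ℤ) * ((dk:ℤ) * A) := by
    exact_mod_cast congrArg (Nat.cast (R := ℤ)) (by rw [← hneq]; ring : n = ds * (dk * A))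
  have hss' : (s:ℤ) = (ds:ℤ) * s' := by exact_mod_cast congrArg (Nat.cast (R := ℤ)) hs'
  -- step 1: j = j'
  have h1 : (ds:ℤ) ∣ ((j:ℤ) - j') := by
    have hd : (ds:ℤ) ∣ (((α:ℤ)*dk+i)*s+j) - (((α':ℤ)*dk+i')*s+j') :=
      dvd_trans ⟨(dk:ℤ)*A, hnz⟩ h
    have h2 : (ds:ℤ) ∣ (((α:ℤ)*dk+i) - ((α':ℤ)*dk+i')) * s :=
      Dvd.dvd.mul_left ⟨(s':ℤ), hss'⟩ _
    have heq : (j:ℤ) - j' = ((((α:ℤ)*dk+i)*s+j) - (((α':ℤ)*dk+i')*s+j'))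
        - (((α:ℤ)*dk+i) - ((α':ℤ)*dk+i')) * s := by ring
    rw [heq]; exact dvd_sub hd h2
  have hjj : j = j' := by
    have := Int.eq_zero_of_abs_lt_dvd h1 (by rw [abs_lt]; push_cast; omega)
    omega
  subst hjj
  -- step 2: dk*A ∣ m - m'
  have hm : (n:ℤ) ∣ (((α:ℤ)*dk+i) - ((α':ℤ)*dk+i')) * s := by
    obtain ⟨c, hc⟩ := h
    exact ⟨c, by linear_combination hc⟩
  have hds0' : (ds:ℤ) ≠ 0 := by positivity
  have hdk0' : (dk:ℤ) ≠ 0 := by positivity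
  have hcan : ((dk:ℤ)*A) ∣ (((α:ℤ)*dk+i) - ((α':ℤ)*dk+i')) * s' := by
    rcases hm with ⟨c, hc⟩
    rw [hnz, hss'] at hc
    refine ⟨c, mul_left_cancel₀ hds0' ?_⟩
    calc (ds:ℤ) * ((((α:ℤ)*dk+i) - ((α':ℤ)*dk+i')) * s')
        = (((α:ℤ)*dk+i) - ((α':ℤ)*dk+i')) * ((ds:ℤ)*s') := by ring
      _ = (ds:ℤ)*((dk:ℤ)*A)*c := hc
      _ = (ds:ℤ)*(((dk:ℤ)*A)*c) := by ring
  have hnds : n / ds = dk * A := by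
    rw [← hneq, Nat.mul_assoc, Nat.mul_div_cancel_left _ hds0]
  have hsds : s / ds = s' := by rw [hs', Nat.mul_div_cancel_left _ hds0]
  rw [hnds, hsds] at hcop
  have hcop' : IsCoprime ((dk:ℤ)*A) (s':ℤ) := by
    have := hcop.isCoprime
    push_cast at this
    exact this
  have hmm : ((dk:ℤ)*A) ∣ (((α:ℤ)*dk+i) - ((α':ℤ)*dk+i')) :=
    hcop'.dvd_of_dvd_mul_right hcan
  -- step 3: i = i'
  have h3 : (dk:ℤ) ∣ ((i:ℤ) - i') := by
    have hd : (dk:ℤ) ∣ (((α:ℤ)*dk+i) - ((α':ℤ)*dk+i')) :=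
      dvd_trans (Dvd.intro A rfl) hmm
    have heq : (i:ℤ) - i' = ((((α:ℤ)*dk+i) - ((α':ℤ)*dk+i'))) - ((α:ℤ) - α') * dk := by ring
    rw [heq]; exact dvd_sub hd (Dvd.dvd.mul_left dvd_rfl _)
  have hii : i = i' := by
    have := Int.eq_zero_of_abs_lt_dvd h3 (by rw [abs_lt]; push_cast; omega)
    omega
  subst hii
  -- step 4: α = α'
  have h4 : (A:ℤ) ∣ ((α:ℤ) - α') := by
    rcases hmm with ⟨c, hc⟩
    refine ⟨c, mul_left_cancel₀ hdk0' ?_⟩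
    calc (dk:ℤ) * ((α:ℤ) - α') = (((α:ℤ)*dk+i) - (((α':ℤ)*dk+i))) := by ring
      _ = (dk:ℤ)*A*c := hc
      _ = (dk:ℤ)*((A:ℤ)*c) := by ring
  have : α = α' := by
    have := Int.eq_zero_of_abs_lt_dvd h4 (by rw [abs_lt]; push_cast; omega)
    omega
  exact ⟨this, rfl, rfl⟩

/-- Every `x ∈ ZMod n` has a unique representation
`x = (α d_k + i) s + j` with `j < d_s`, `i < d_k`, `α < n/(d_s d_k)`. -/
theorem stmt_1 (n s k : ℕ) (hn : 0 < n) (hs : 0 < s) (hk : 0 < k)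
    (hsn : s < n) (hkn : k < n)
    (hdvd : Nat.gcd n s * Nat.gcd n k ∣ n) :
    ∀ x : ZMod n, ∃! t : ℕ × ℕ × ℕ,
      t.1 < n / (Nat.gcd n s * Nat.gcd n k) ∧
      t.2.1 < Nat.gcd n k ∧ t.2.2 < Nat.gcd n s ∧
      x = (((t.1 * Nat.gcd n k + t.2.1) * s + t.2.2 : ℕ) : ZMod n) := by
  intro x
  haveI : NeZero n := ⟨hn.ne'⟩
  set ds := Nat.gcd n s with hds
  set dk := Nat.gcd n k with hdk
  set A := n / (ds * dk) with hA
  have hds0 : 0 < ds := Nat.gcd_pos_of_pos_left _ hn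
  have hdk0 : 0 < dk := Nat.gcd_pos_of_pos_left _ hn
  have hneq : ds * dk * A = n := Nat.mul_div_cancel' hdvd
  have hA0 : 0 < A := Nat.div_pos (Nat.le_of_dvd hn hdvd) (Nat.mul_pos hds0 hdk0)
  have hdss : ds ∣ s := Nat.gcd_dvd_right n s
  have hcop : Nat.Coprime (n / ds) (s / ds) := Nat.coprime_div_gcd_div_gcd hds0
  -- the injective map
  have key : ∀ α i j α' i' j' : ℕ, α < A → i < dk → j < ds → α' < A → i' < dk → j' < ds →
      (((α * dk + i) * s + j : ℕ) : ZMod n) = (((α' * dk + i') * s + j' : ℕ) : ZMod n) →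
      α = α' ∧ i = i' ∧ j = j' := by
    intro α i j α' i' j' hα hi hj hα' hi' hj' heq
    rw [ZMod.natCast_eq_natCast_iff] at heq
    have hd : (n:ℤ) ∣ (((α:ℤ)*dk+i)*s+j) - (((α':ℤ)*dk+i')*s+j') := by
      have h5 := (Nat.modEq_iff_dvd (n := n)).mp heq.symm
      push_cast at h5
      obtain ⟨c, hc⟩ := h5
      exact ⟨c, by linear_combination hc⟩
    exact aux_inj n s ds dk A hds0 hdk0 hdss hneq hcop α i j α' i' j' hα hi hj hα' hi' hj' hd
  -- bijectivity via cardinality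
  set g : Fin A × Fin dk × Fin ds → ZMod n :=
    fun t => (((t.1.val * dk + t.2.1.val) * s + t.2.2.val : ℕ) : ZMod n) with hg
  have hinj : Function.Injective g := by
    rintro ⟨a, b, c⟩ ⟨a', b', c'⟩ he
    obtain ⟨h1, h2, h3⟩ := key a b c a' b' c' a.isLt b.isLt c.isLt a'.isLt b'.isLt c'.isLt he
    simp only [Prod.mk.injEq]
    exact ⟨Fin.ext h1, Fin.ext h2, Fin.ext h3⟩
  have hcard : Fintype.card (Fin A × Fin dk × Fin ds) = Fintype.card (ZMod n) := by
    simp [ZMod.card, ← hneq]; ring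
  have hbij : Function.Bijective g :=
    (Fintype.bijective_iff_injective_and_card g).mpr ⟨hinj, hcard⟩
  obtain ⟨⟨a, b, c⟩, hx⟩ := hbij.surjective x
  simp only [hg] at hx
  refine ⟨(a.val, b.val, c.val), ⟨a.isLt, b.isLt, c.isLt, hx.symm⟩, ?_⟩
  rintro ⟨a', b', c'⟩ ⟨h1, h2, h3, h4⟩
  obtain ⟨e1, e2, e3⟩ := key a' b' c' a.val b.val c.val h1 h2 h3 a.isLt b.isLt c.isLt
    (h4.symm.trans hx.symm)
  simp [e1, e2, e3]
end

section
/- If π is an (s,k)-clash-free permutation of Z_n (with n = sk + r, 1 ≤ r < s, r < k, s = ⌊(n-1)/k⌋), then in the associated packing of n rectangles of size s×k on the n×n torus (rectangle R_i covering cells (i+x, π(i)+y) for 0 ≤ x < s, 0 ≤ y < k), every column of the torus contains exactly r cells not covered by any rectangle. -/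
/-- Cell `(x,y)` of the torus is covered by the rectangle of `i`
(the `s × k` rectangle with lower-left corner `(i, π i)`). -/
def CoveredBy (n s k : ℕ) (π : Equiv.Perm (ZMod n)) (x y i : ZMod n) : Prop :=
  ∃ a b : ℕ, a < s ∧ b < k ∧ x = i + (a : ZMod n) ∧ y = π i + (b : ZMod n)

lemma sub_val_aux {n : ℕ} [NeZero n] {a b : ℕ} (h : b ≤ a) (h2 : a < n) :
    ((a : ZMod n) - (b : ZMod n)).val = a - b := by
  have h3 : ((a : ZMod n) - (b : ZMod n)) = ((a - b : ℕ) : ZMod n) := by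
    rw [Nat.cast_sub h]
  rw [h3, ZMod.val_cast_of_lt (by omega)]

/-- Every column of the torus packing contains exactly `r` free cells. -/
theorem stmt_2 (n s k r : ℕ) (hk : 0 < k) (hs : s = (n - 1) / k)
    (hn : n = s * k + r) (hr1 : 1 ≤ r) (hrs : r < s) (hrk : r < k)
    (π : Equiv.Perm (ZMod n)) (hcf : ClashFree n s k π) :
    ∀ x : ZMod n,
      {y : ZMod n | ¬ ∃ i : ZMod n, CoveredBy n s k π x y i}.ncard = r := by
  haveI : NeZero n := ⟨by omega⟩
  have hs1 : 1 ≤ s := by omega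
  have hsn : s ≤ n := by nlinarith
  have hkn : k < n := by nlinarith
  intro x
  set f : ℕ × ℕ → ZMod n := fun p => π (x - (p.1 : ZMod n)) + (p.2 : ZMod n) with hf
  set F : Finset (ZMod n) := (Finset.range s ×ˢ Finset.range k).image f with hF
  have hinj : Set.InjOn f ↑(Finset.range s ×ˢ Finset.range k) := by
    rintro ⟨a, b⟩ hab ⟨a', b'⟩ hab' heq
    simp only [Finset.coe_product, Set.mem_prod, Finset.mem_coe, Finset.mem_range] at hab hab'
    obtain ⟨ha, hb⟩ := hab
    obtain ⟨ha', hb'⟩ := hab'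
    simp only [hf] at heq
    by_cases haa : a = a'
    · subst haa
      have hbb : (b : ZMod n) = (b' : ZMod n) := by
        exact add_left_cancel heq
      have := congrArg ZMod.val hbb
      rw [ZMod.val_cast_of_lt (by omega), ZMod.val_cast_of_lt (by omega)] at this
      simp [this]
    · exfalso
      set i : ZMod n := x - (a : ZMod n) with hi
      set j : ZMod n := x - (a' : ZMod n) with hj
      have hij : i ≠ j := by
        intro h
        apply haa
        have hca : (a : ZMod n) = (a' : ZMod n) := by
          have := sub_right_injective h
          exact this
        have := congrArg ZMod.val hca
        rwa [ZMod.val_cast_of_lt (by omega), ZMod.val_cast_of_lt (by omega)] at this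
      have hij1 : i - j = (a' : ZMod n) - (a : ZMod n) := by
        rw [hi, hj]; ring
      have hij2 : j - i = (a : ZMod n) - (a' : ZMod n) := by
        rw [hi, hj]; ring
      have hdist : circDist n i j < s := by
        unfold circDist
        rcases lt_or_gt_of_ne haa with hlt | hlt
        · have : (i - j).val = a' - a := by
            rw [hij1, sub_val_aux (le_of_lt hlt) (by omega)]
          calc min (i - j).val (j - i).val ≤ (i - j).val := min_le_left _ _
            _ < s := by omega
        · have : (j - i).val = a - a' := by
            rw [hij2, sub_val_aux (le_of_lt hlt) (by omega)]
          calc min (i - j).val (j - i).val ≤ (j - i).val := min_le_right _ _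
            _ < s := by omega
      have hkd := hcf i j hij hdist
      have hpi : π i - π j = (b' : ZMod n) - (b : ZMod n) := by
        have : π i + (b : ZMod n) = π j + (b' : ZMod n) := heq
        linear_combination this
      have hpj : π j - π i = (b : ZMod n) - (b' : ZMod n) := by
        linear_combination -hpi
      unfold circDist at hkd
      rcases le_or_gt b b' with hbb | hbb
      · have : (π i - π j).val = b' - b := by
          rw [hpi, sub_val_aux hbb (by omega)]
        have := min_le_left (π i - π j).val (π j - π i).val
        omega
      · have : (π j - π i).val = b - b' := by
          rw [hpj, sub_val_aux (le_of_lt hbb) (by omega)]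
        have := min_le_right (π i - π j).val (π j - π i).val
        omega
  have hcard : F.card = s * k := by
    rw [hF, Finset.card_image_of_injOn hinj, Finset.card_product,
      Finset.card_range, Finset.card_range]
  have hcov : ∀ y : ZMod n, (∃ i : ZMod n, CoveredBy n s k π x y i) ↔ y ∈ F := by
    intro y
    constructor
    · rintro ⟨i, a, b, ha, hb, hx, hy⟩
      have hi : i = x - (a : ZMod n) := by rw [hx]; ring
      rw [hF, Finset.mem_image]
      refine ⟨(a, b), ?_, ?_⟩
      · simp [Finset.mem_product, ha, hb]
      · simp only [hf]
        rw [← hi, ← hy]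
    · intro hy
      rw [hF, Finset.mem_image] at hy
      obtain ⟨⟨a, b⟩, hmem, heq⟩ := hy
      simp only [Finset.mem_product, Finset.mem_range] at hmem
      refine ⟨x - (a : ZMod n), a, b, hmem.1, hmem.2, by ring, ?_⟩
      simp only [hf] at heq
      exact heq.symm
  have hset : {y : ZMod n | ¬ ∃ i : ZMod n, CoveredBy n s k π x y i} = ↑(Fᶜ) := by
    ext y
    simp only [Set.mem_setOf_eq, Finset.coe_compl, Set.mem_compl_iff, Finset.mem_coe]
    exact not_congr (hcov y)
  rw [hset, Set.ncard_coe_finset, Finset.card_compl, hcard]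
  have : Fintype.card (ZMod n) = n := ZMod.card n
  omega
end

section
/- If π is an (s,k)-clash-free permutation of Z_n (with n = sk + r, 1 ≤ r < s, r < k), then every row of the associated torus packing contains exactly r cells not covered by any rectangle. -/
/-- If two circular intervals of length `s` overlap, the distance of their
left endpoints is less than `s`. -/
lemma circDist_lt_of_add_eq {n : ℕ} (s : ℕ) (hs : s ≤ n) (i j : ZMod n)
    (a b : ℕ) (ha : a < s) (hb : b < s)
    (h : i + (a : ZMod n) = j + (b : ZMod n)) : circDist n i j < s := by
  rcases le_total a b with hab | hab
  · have h1 : i - j = ((b - a : ℕ) : ZMod n) := by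
      rw [Nat.cast_sub hab]; linear_combination h
    have h2 : (i - j).val = b - a := by
      rw [h1, ZMod.val_cast_of_lt (by omega)]
    calc circDist n i j ≤ (i - j).val := min_le_left _ _
      _ < s := by omega
  · have h1 : j - i = ((a - b : ℕ) : ZMod n) := by
      rw [Nat.cast_sub hab]; linear_combination -h
    have h2 : (j - i).val = a - b := by
      rw [h1, ZMod.val_cast_of_lt (by omega)]
    calc circDist n i j ≤ (j - i).val := min_le_right _ _
      _ < s := by omega

/-- Every row of the torus packing contains exactly `r` free cells. -/
theorem stmt_3 (n s k r : ℕ) (hk : 0 < k)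
    (hn : n = s * k + r) (hr1 : 1 ≤ r) (hrs : r < s) (hrk : r < k)
    (π : Equiv.Perm (ZMod n)) (hcf : ClashFree n s k π) :
    ∀ y : ZMod n,
      {x : ZMod n | ¬ ∃ i : ZMod n, CoveredBy n s k π x y i}.ncard = r := by
  intro y
  have hs1 : 1 ≤ s := by omega
  have hsn : s ≤ n := by nlinarith
  have hkn : k ≤ n := by nlinarith
  haveI : NeZero n := ⟨by omega⟩
  -- the covering map
  set F : Fin s × Fin k → ZMod n :=
    fun p => π.symm (y - (p.2 : ℕ)) + ((p.1 : ℕ) : ZMod n) with hF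
  have hinj : Function.Injective F := by
    rintro ⟨a, b⟩ ⟨a', b'⟩ h
    simp only [hF] at h
    set i := π.symm (y - (b : ℕ)) with hi
    set j := π.symm (y - (b' : ℕ)) with hj
    have hij : i = j := by
      by_contra hne
      have hd : circDist n i j < s :=
        circDist_lt_of_add_eq s hsn i j a a' a.isLt a'.isLt h
      have hkd : k ≤ circDist n (π i) (π j) := hcf i j hne hd
      have hpi : π i = y - (b : ℕ) := π.apply_symm_apply _
      have hpj : π j = y - (b' : ℕ) := π.apply_symm_apply _
      have hyy : π i + ((b : ℕ) : ZMod n) = π j + ((b' : ℕ) : ZMod n) := by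
        rw [hpi, hpj]; ring
      have := circDist_lt_of_add_eq k hkn (π i) (π j) b b' b.isLt b'.isLt hyy
      omega
    have hbb : (b : Fin k) = b' := by
      have : y - ((b : ℕ) : ZMod n) = y - ((b' : ℕ) : ZMod n) := by
        have := congrArg π hij
        rwa [π.apply_symm_apply, π.apply_symm_apply] at this
      have hcast : ((b : ℕ) : ZMod n) = ((b' : ℕ) : ZMod n) := by
        linear_combination -this
      have := congrArg ZMod.val hcast
      rw [ZMod.val_cast_of_lt (by omega), ZMod.val_cast_of_lt (by omega)] at this
      exact Fin.ext this
    have haa : (a : Fin s) = a' := by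
      rw [hij] at h
      have hcast : ((a : ℕ) : ZMod n) = ((a' : ℕ) : ZMod n) := by
        exact add_left_cancel h
      have := congrArg ZMod.val hcast
      rw [ZMod.val_cast_of_lt (by omega), ZMod.val_cast_of_lt (by omega)] at this
      exact Fin.ext this
    exact Prod.ext haa hbb
  -- the covered set is the range of F
  have hset : {x : ZMod n | ∃ i : ZMod n, CoveredBy n s k π x y i} = Set.range F := by
    ext x
    constructor
    · rintro ⟨i, a, b, ha, hb, hx, hy⟩
      refine ⟨(⟨a, ha⟩, ⟨b, hb⟩), ?_⟩
      have hpi : π i = y - (b : ZMod n) := by rw [hy]; ring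
      have : π.symm (y - (b : ZMod n)) = i := by rw [← hpi, π.symm_apply_apply]
      simp only [hF, this, hx]
    · rintro ⟨⟨a, b⟩, rfl⟩
      refine ⟨π.symm (y - (b : ℕ)), a, b, a.isLt, b.isLt, rfl, ?_⟩
      rw [π.apply_symm_apply]; ring
  have hcard : {x : ZMod n | ∃ i : ZMod n, CoveredBy n s k π x y i}.ncard = s * k := by
    rw [hset]
    rw [← Set.image_univ, ← Finset.coe_univ, ← Finset.coe_image,
      Set.ncard_coe_finset, Finset.card_image_of_injective _ hinj,
      Finset.card_univ]
    simp [Fintype.card_prod]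
  have hcompl : {x : ZMod n | ¬ ∃ i : ZMod n, CoveredBy n s k π x y i}
      = {x : ZMod n | ∃ i : ZMod n, CoveredBy n s k π x y i}ᶜ := rfl
  rw [hcompl]
  have := Set.ncard_add_ncard_compl {x : ZMod n | ∃ i : ZMod n, CoveredBy n s k π x y i}
  rw [hcard, Nat.card_zmod] at this
  omega
end

section
/- Suppose π is an (s,k)-clash-free permutation of Z_n with n = sk + r, 1 ≤ r < s, r < k. For every i ∈ Z_n there exists exactly one j ∈ Z_n such that the rectangle R_j touches the top edge of R_i; that is, there is exactly one j with π(j) = π(i) + k mod n and ||i,j||_n < s. -/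
lemma circDist_comm (n : ℕ) (i j : ZMod n) : circDist n i j = circDist n j i := by
  rw [circDist, circDist, min_comm]

/-- Exactly one rectangle touches the top edge of each rectangle: for each `i`
there is exactly one `j` with `π j = π i + k` and `‖i,j‖ < s`. -/
theorem stmt_4 (n s k r : ℕ) (hk : 0 < k)
    (hn : n = s * k + r) (hr1 : 1 ≤ r) (hrs : r < s) (hrk : r < k)
    (π : Equiv.Perm (ZMod n)) (hcf : ClashFree n s k π) :
    ∀ i : ZMod n, ∃! j : ZMod n,
      π j = π i + (k : ZMod n) ∧ circDist n i j < s := by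
  have hsk : s ≤ s * k := Nat.le_mul_of_pos_right s hk
  have h2k : 2 * k ≤ s * k := Nat.mul_le_mul_right k (by omega)
  have hsn : s ≤ n := by omega
  have hkn : 2 * k + 1 ≤ n := by omega
  haveI : NeZero n := ⟨by omega⟩
  intro i
  refine ⟨π.symm (π i + (k : ZMod n)), ⟨π.apply_symm_apply _, ?_⟩, ?_⟩
  · by_contra hfar
    push_neg at hfar
    have hval : ∀ c : ℕ, c < n → ((c : ZMod n)).val = c := fun c hc => ZMod.val_cast_of_lt hc
    have hinjc : Set.InjOn (fun c : ℕ => π.symm (π i + (c : ZMod n)))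
        (Finset.range (k+1)) := by
      intro c hc c' hc' hcc
      simp only [Finset.coe_range, Set.mem_Iio] at hc hc'
      have h1 : π i + (c : ZMod n) = π i + (c' : ZMod n) := π.symm.injective hcc
      have h2 : (c : ZMod n) = (c' : ZMod n) := add_left_cancel h1
      have h3 := congrArg ZMod.val h2
      rwa [hval c (by omega), hval c' (by omega)] at h3
    set P : Finset (ZMod n) :=
      (Finset.range (k+1)).image (fun c : ℕ => π.symm (π i + (c : ZMod n))) with hP
    have hcard : P.card = k + 1 := by
      rw [hP, Finset.card_image_of_injOn hinjc, Finset.card_range]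
    -- key ordered claim: two arc-preimages cannot be close
    have key : ∀ c c' : ℕ, c < c' → c' ≤ k →
        circDist n (π.symm (π i + (c : ZMod n))) (π.symm (π i + (c' : ZMod n))) < s →
        False := by
      intro c c' hlt hle hclose
      have hpq : π.symm (π i + (c : ZMod n)) ≠ π.symm (π i + (c' : ZMod n)) := by
        intro hEq
        have := hinjc (by simp only [Finset.coe_range, Set.mem_Iio]; omega)
          (by simp only [Finset.coe_range, Set.mem_Iio]; omega) hEq
        omega
      have hk' := hcf _ _ hpq hclose
      have hπp : π (π.symm (π i + (c : ZMod n))) = π i + (c : ZMod n) :=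
        π.apply_symm_apply _
      have hπq : π (π.symm (π i + (c' : ZMod n))) = π i + (c' : ZMod n) :=
        π.apply_symm_apply _
      rw [hπp, hπq] at hk'
      have hdiff : (π i + (c' : ZMod n)) - (π i + (c : ZMod n)) = ((c' - c : ℕ) : ZMod n) := by
        rw [Nat.cast_sub (le_of_lt hlt)]; ring
      have hvd : ((π i + (c' : ZMod n)) - (π i + (c : ZMod n))).val = c' - c := by
        rw [hdiff, hval _ (by omega)]
      have hkcc : k ≤ c' - c := by
        calc k ≤ circDist n (π i + (c : ZMod n)) (π i + (c' : ZMod n)) := hk'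
        _ ≤ ((π i + (c' : ZMod n)) - (π i + (c : ZMod n))).val := min_le_right _ _
        _ = c' - c := hvd
      have hc0 : c = 0 := by omega
      have hck : c' = k := by omega
      subst hc0; subst hck
      have hpi : π.symm (π i + ((0 : ℕ) : ZMod n)) = i := by
        simp
      rw [hpi] at hclose
      exact absurd hclose (not_lt.mpr hfar)
    have hspread : ∀ p ∈ P, ∀ q ∈ P, p ≠ q → s ≤ circDist n p q := by
      intro p hp q hq hpq
      by_contra hcl
      push_neg at hcl
      simp only [hP, Finset.mem_image, Finset.mem_range] at hp hq
      obtain ⟨c, hc, rfl⟩ := hp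
      obtain ⟨c', hc', rfl⟩ := hq
      rcases lt_trichotomy c c' with h | h | h
      · exact key c c' h (by omega) hcl
      · exact hpq (by rw [h])
      · refine key c' c h (by omega) ?_
        rwa [circDist_comm] at hcl
    -- injective packing map
    have hinj2 : Set.InjOn (fun pt : ZMod n × ℕ => pt.1 + (pt.2 : ZMod n))
        (↑(P ×ˢ Finset.range s) : Set (ZMod n × ℕ)) := by
      rintro ⟨p, t⟩ hpt ⟨p', t'⟩ hpt' hEq
      simp only [Finset.mem_coe, Finset.mem_product, Finset.mem_range] at hpt hpt'
      obtain ⟨hp, ht⟩ := hpt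
      obtain ⟨hp', ht'⟩ := hpt'
      simp only at hEq
      have hpp : p = p' := by
        by_contra hne
        have hs := hspread p hp p' hp' hne
        rcases le_total t t' with hle | hle
        · have hd : p - p' = ((t' - t : ℕ) : ZMod n) := by
            rw [Nat.cast_sub hle]
            have : p + (t : ZMod n) = p' + (t' : ZMod n) := hEq
            rw [eq_sub_iff_add_eq]
            linear_combination this
          have : circDist n p p' ≤ t' - t := by
            calc circDist n p p' ≤ (p - p').val := min_le_left _ _
            _ = t' - t := by rw [hd, hval _ (by omega)]
          omega
        · have hd : p' - p = ((t - t' : ℕ) : ZMod n) := by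
            rw [Nat.cast_sub hle]
            have : p + (t : ZMod n) = p' + (t' : ZMod n) := hEq
            rw [eq_sub_iff_add_eq]
            linear_combination this.symm
          have : circDist n p p' ≤ t - t' := by
            calc circDist n p p' ≤ (p' - p).val := min_le_right _ _
            _ = t - t' := by rw [hd, hval _ (by omega)]
          omega
      subst hpp
      have htt : (t : ZMod n) = (t' : ZMod n) := by
        have : p + (t : ZMod n) = p + (t' : ZMod n) := hEq
        exact add_left_cancel this
      have := congrArg ZMod.val htt
      rw [hval _ (by omega), hval _ (by omega)] at this
      simp [this]
    have hle : (P ×ˢ Finset.range s).card ≤ (Finset.univ : Finset (ZMod n)).card :=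
      Finset.card_le_card_of_injOn _ (fun _ _ => Finset.mem_univ _) hinj2
    rw [Finset.card_product, hcard, Finset.card_range, Finset.card_univ, ZMod.card] at hle
    have hmul : (k + 1) * s = s * k + s := by ring
    omega
  · rintro y ⟨hy, -⟩
    rw [← hy, Equiv.symm_apply_apply]
end

section
/- In the graph Γ on vertex set Z_n where i and j are joined when rectangles R_i and R_j touch on their left or right sides, each connected component (warp thread) is a cycle with exactly n/gcd(n,s) vertices, and the vertices of a component are precisely the elements of a single congruence class modulo gcd(n,s). -/
/-- The graph `Γ` joining `i` and `j` when rectangles `R_i` and `R_j`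
touch on their left or right sides: `j` is horizontally `s` away from `i`
and the vertical projections (heights `k`) overlap. -/
def warpGraph (n s k : ℕ) (π : Equiv.Perm (ZMod n)) : SimpleGraph (ZMod n) :=
  SimpleGraph.fromRel (fun i j => (j - i).val = s ∧ circDist n (π i) (π j) < k)



lemma packing {n k : ℕ} [NeZero n] (hkn : k ≤ n) (S : Finset (ZMod n))
    (h : ∀ x ∈ S, ∀ y ∈ S, x ≠ y → k ≤ circDist n x y) : S.card * k ≤ n := by
  classical
  have hn0 : 0 < n := Nat.pos_of_ne_zero (NeZero.ne n)
  set f : ZMod n × ℕ → ZMod n := fun p => p.1 + (p.2 : ZMod n) with hf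
  have key : ∀ x ∈ S, ∀ y ∈ S, ∀ a b : ℕ, a < k → b < k → x ≠ y → b ≤ a →
      x + (a : ZMod n) ≠ y + (b : ZMod n) := by
    intro x hx y hy a b ha hb hxy hba heq
    have hsub : y - x = ((a - b : ℕ) : ZMod n) := by
      push_cast [Nat.cast_sub hba]
      have : y + (b:ZMod n) = x + (a:ZMod n) := heq.symm
      linear_combination this
    have hval : (y - x).val = a - b := by
      rw [hsub, ZMod.val_natCast_of_lt (by omega)]
    have := h x hx y hy hxy
    unfold circDist at this
    omega
  have hinj : Set.InjOn f ↑(S ×ˢ Finset.range k) := by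
    intro p hp q hq heq
    simp only [Finset.coe_product, Set.mem_prod, Finset.mem_coe, Finset.coe_range,
      Set.mem_Iio] at hp hq
    obtain ⟨hp1, hp2⟩ := hp
    obtain ⟨hq1, hq2⟩ := hq
    by_cases hxy : p.1 = q.1
    · have : ((p.2 : ZMod n)) = (q.2 : ZMod n) := by
        have := heq; simp only [hf, hxy] at this; exact add_left_cancel this
      have : p.2 = q.2 := by
        have h1 := ZMod.val_natCast_of_lt (n := n) (a := p.2) (by omega)
        have h2 := ZMod.val_natCast_of_lt (n := n) (a := q.2) (by omega)
        have := congrArg ZMod.val this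
        rw [h1, h2] at this
        exact this
      exact Prod.ext hxy this
    · exfalso
      rcases le_total q.2 p.2 with hba | hba
      · exact key p.1 hp1 q.1 hq1 p.2 q.2 hp2 hq2 hxy hba heq
      · exact key q.1 hq1 p.1 hp1 q.2 p.2 hq2 hp2 (Ne.symm hxy) hba heq.symm
  calc S.card * k = ((S ×ˢ Finset.range k).image f).card := by
        rw [Finset.card_image_of_injOn hinj, Finset.card_product, Finset.card_range]
      _ ≤ Fintype.card (ZMod n) := Finset.card_le_univ _
      _ = n := ZMod.card n


lemma touching {n s k r : ℕ} [NeZero n] (hn : n = s * k + r) (hr1 : 1 ≤ r)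
    (hrs : r < s) (hrk : r < k) (π : Equiv.Perm (ZMod n)) (hcf : ClashFree n s k π)
    (i : ZMod n) : circDist n (π i) (π (i + (s : ZMod n))) < k := by
  classical
  have hs2 : 2 ≤ s := by omega
  have hk2 : 2 ≤ k := by omega
  have hns : 2 * s + 1 ≤ n := by nlinarith
  have hnk : 2 * k + 1 ≤ n := by nlinarith
  by_contra hcon
  push_neg at hcon
  -- circDist between i+j and i+l for j < l ≤ s
  have hdist : ∀ j l : ℕ, j < l → l ≤ s →
      (i + (j:ZMod n)) ≠ (i + (l:ZMod n)) ∧ circDist n (i + (j:ZMod n)) (i + (l:ZMod n)) = l - j := by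
    intro j l hjl hls
    have hlj1 : (i + (l:ZMod n)) - (i + (j:ZMod n)) = ((l - j : ℕ) : ZMod n) := by
      push_cast [Nat.cast_sub hjl.le]; ring
    have hlj2 : (i + (j:ZMod n)) - (i + (l:ZMod n)) = ((n - (l - j) : ℕ) : ZMod n) := by
      have h2 : ((n - (l - j) : ℕ) : ZMod n) = -(((l - j : ℕ) : ℕ) : ZMod n) := by
        rw [Nat.cast_sub (show l - j ≤ n by omega), ZMod.natCast_self]; ring
      rw [h2, Nat.cast_sub hjl.le]; push_cast; ring
    have hv1 : ((i + (l:ZMod n)) - (i + (j:ZMod n))).val = l - j := by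
      rw [hlj1, ZMod.val_natCast_of_lt (by omega)]
    have hv2 : ((i + (j:ZMod n)) - (i + (l:ZMod n))).val = n - (l - j) := by
      rw [hlj2, ZMod.val_natCast_of_lt (by omega)]
    constructor
    · intro hEq
      rw [hEq, sub_self] at hv1
      simp [ZMod.val_zero] at hv1
      omega
    · unfold circDist; omega
  -- all pairs among π(i+j), j=0..s, are ≥ k apart
  have hpair : ∀ j l : ℕ, j < l → l ≤ s →
      k ≤ circDist n (π (i + (j:ZMod n))) (π (i + (l:ZMod n))) := by
    intro j l hjl hls
    obtain ⟨hne, hd⟩ := hdist j l hjl hls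
    by_cases hcase : j = 0 ∧ l = s
    · obtain ⟨rfl, rfl⟩ := hcase
      simpa using hcon
    · have hlt : l - j < s := by omega
      exact hcf _ _ hne (by omega)
  set S : Finset (ZMod n) := (Finset.range (s+1)).image (fun j : ℕ => π (i + (j:ZMod n))) with hS
  have hcard : S.card = s + 1 := by
    rw [hS, Finset.card_image_of_injOn, Finset.card_range]
    intro j hj l hl heq
    simp only [Finset.coe_range, Set.mem_Iio] at hj hl
    have heq' : i + (j:ZMod n) = i + (l:ZMod n) := π.injective heq
    rcases lt_trichotomy j l with h | h | h
    · exact absurd heq' (hdist j l h (by omega)).1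
    · exact h
    · exact absurd heq'.symm (hdist l j h (by omega)).1
  have hSpair : ∀ x ∈ S, ∀ y ∈ S, x ≠ y → k ≤ circDist n x y := by
    intro x hx y hy hxy
    simp only [hS, Finset.mem_image, Finset.mem_range] at hx hy
    obtain ⟨j, hj, rfl⟩ := hx
    obtain ⟨l, hl, rfl⟩ := hy
    rcases lt_trichotomy j l with h | h | h
    · exact hpair j l h (by omega)
    · exact absurd (by rw [h]) hxy
    · rw [circDist_comm]; exact hpair l j h (by omega)
  have := packing (by omega) S hSpair
  rw [hcard] at this
  nlinarith


section Main
variable {n s k r : ℕ} [NeZero n] (hn : n = s * k + r) (hr1 : 1 ≤ r)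
    (hrs : r < s) (hrk : r < k) (π : Equiv.Perm (ZMod n)) (hcf : ClashFree n s k π)

include hn hr1 hrs hrk hcf

lemma basic_ineq : 2 ≤ s ∧ 2 ≤ k ∧ 2 * s + 1 ≤ n ∧ 2 * k + 1 ≤ n := by
  refine ⟨by omega, by omega, by nlinarith, by nlinarith⟩

lemma warp_adj_iff (i j : ZMod n) :
    (warpGraph n s k π).Adj i j ↔ (j = i + (s:ZMod n) ∨ j = i - (s:ZMod n)) := by
  obtain ⟨hs2, hk2, hns, hnk⟩ := basic_ineq hn hr1 hrs hrk π hcf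
  have hsval : ((s:ZMod n)).val = s := ZMod.val_natCast_of_lt (by omega)
  have hsne : (s:ZMod n) ≠ 0 := by
    intro h; rw [h, ZMod.val_zero] at hsval; omega
  constructor
  · rintro ⟨hne, ⟨h1, -⟩ | ⟨h1, -⟩⟩
    · left
      have : j - i = (s:ZMod n) := by
        have := ZMod.natCast_rightInverse (n := n) (j - i)
        rw [h1] at this; exact this.symm
      linear_combination this
    · right
      have : i - j = (s:ZMod n) := by
        have := ZMod.natCast_rightInverse (n := n) (i - j)
        rw [h1] at this; exact this.symm
      linear_combination -this
  · rintro (rfl | rfl)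
    · refine ⟨by intro h; exact hsne (by linear_combination -h), Or.inl ⟨by rw [add_sub_cancel_left, hsval], ?_⟩⟩
      exact touching hn hr1 hrs hrk π hcf i
    · refine ⟨by intro h; exact hsne (by linear_combination h), Or.inr ⟨by rw [sub_sub_cancel, hsval], ?_⟩⟩
      have := touching hn hr1 hrs hrk π hcf (i - (s:ZMod n))
      rwa [sub_add_cancel] at this

lemma neighbor_eq (i : ZMod n) :
    (warpGraph n s k π).neighborSet i = {i - (s:ZMod n), i + (s:ZMod n)} := by
  ext j
  simp only [SimpleGraph.mem_neighborSet, warp_adj_iff hn hr1 hrs hrk π hcf,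
    Set.mem_insert_iff, Set.mem_singleton_iff]
  tauto

lemma sub_ne_add (i : ZMod n) : i - (s:ZMod n) ≠ i + (s:ZMod n) := by
  obtain ⟨hs2, hk2, hns, hnk⟩ := basic_ineq hn hr1 hrs hrk π hcf
  intro h
  have h2 : ((2 * s : ℕ) : ZMod n) = 0 := by push_cast; linear_combination -h
  rw [ZMod.natCast_eq_zero_iff] at h2
  have := Nat.le_of_dvd (by omega) h2
  omega

end Main
section Reach
variable {n s k r : ℕ} [NeZero n] (hn : n = s * k + r) (hr1 : 1 ≤ r)
    (hrs : r < s) (hrk : r < k) (π : Equiv.Perm (ZMod n)) (hcf : ClashFree n s k π)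

include hn hr1 hrs hrk hcf

lemma reach_forward {i j : ZMod n} (h : (warpGraph n s k π).Reachable i j) :
    ∃ t : ℕ, j = i + ((t * Nat.gcd n s : ℕ) : ZMod n) := by
  obtain ⟨hs2, hk2, hns, hnk⟩ := basic_ineq hn hr1 hrs hrk π hcf
  set g := Nat.gcd n s with hg
  have hgs : g ∣ s := Nat.gcd_dvd_right n s
  have hgn : g ∣ n := Nat.gcd_dvd_left n s
  have hgns : g ∣ n - s := Nat.dvd_sub hgn hgs
  obtain ⟨w⟩ := h
  induction w with
  | nil =>
    exact ⟨0, by simp⟩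
  | @cons u v b hadj w ih =>
    obtain ⟨t, rfl⟩ := ih
    rcases (warp_adj_iff hn hr1 hrs hrk π hcf u v).1 hadj with rfl | rfl
    · refine ⟨t + s / g, ?_⟩
      have harith : (t + s / g) * g = t * g + s := by
        rw [add_mul, Nat.div_mul_cancel hgs]
      rw [harith]
      push_cast
      ring
    · refine ⟨t + (n - s) / g, ?_⟩
      have harith : (t + (n - s) / g) * g = t * g + (n - s) := by
        rw [add_mul, Nat.div_mul_cancel hgns]
      have hns' : ((n - s : ℕ) : ZMod n) = -(s : ZMod n) := by
        rw [Nat.cast_sub (by omega), ZMod.natCast_self]; ring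
      rw [harith]
      push_cast [hns']
      ring

lemma reach_step (i : ZMod n) (t : ℕ) :
    (warpGraph n s k π).Reachable i (i + ((t * s : ℕ) : ZMod n)) := by
  induction t with
  | zero =>
    have h0 : ((0 * s : ℕ) : ZMod n) = 0 := by push_cast; ring
    rw [h0, add_zero]
  | succ t ih =>
    refine ih.trans (SimpleGraph.Adj.reachable ?_)
    rw [warp_adj_iff hn hr1 hrs hrk π hcf]
    left
    push_cast
    ring

lemma gcd_cast_eq : ∃ b' : ℕ, ((Nat.gcd n s : ℕ) : ZMod n) = ((b' * s : ℕ) : ZMod n) := by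
  have hbez := Nat.gcd_eq_gcd_ab n s
  set b := Nat.gcdB n s with hb
  refine ⟨(b % (n:ℤ)).toNat, ?_⟩
  have hn0 : (0:ℤ) < (n:ℤ) := by exact_mod_cast Nat.pos_of_ne_zero (NeZero.ne n)
  have htn : ((b % (n:ℤ)).toNat : ℤ) = b % (n:ℤ) :=
    Int.toNat_of_nonneg (Int.emod_nonneg b (by omega))
  have key : ((Nat.gcd n s : ℤ) : ZMod n) = (((b % (n:ℤ)).toNat * s : ℤ) : ZMod n) := by
    rw [hbez]
    push_cast [htn]
    rw [ZMod.natCast_self]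
    ring
  have e1 : ((Nat.gcd n s : ℕ) : ZMod n) = ((Nat.gcd n s : ℤ) : ZMod n) := by push_cast; ring
  have e2 : (((b % (n:ℤ)).toNat * s : ℕ) : ZMod n) = (((b % (n:ℤ)).toNat * s : ℤ) : ZMod n) := by
    push_cast; ring
  rw [e1, e2, key]

lemma reach_backward (i : ZMod n) (t : ℕ) :
    (warpGraph n s k π).Reachable i (i + ((t * Nat.gcd n s : ℕ) : ZMod n)) := by
  obtain ⟨b', hb'⟩ := gcd_cast_eq hn hr1 hrs hrk π hcf
  have : ((t * Nat.gcd n s : ℕ) : ZMod n) = ((t * b' * s : ℕ) : ZMod n) := by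
    push_cast
    push_cast at hb'
    rw [mul_assoc]
    rw [hb']
  rw [this]
  exact reach_step hn hr1 hrs hrk π hcf i (t * b')

end Reach
lemma coset_eq_zmultiples {n : ℕ} [NeZero n] (g : ℕ) (i : ZMod n) :
    {j : ZMod n | ∃ t : ℕ, j = i + ((t * g : ℕ) : ZMod n)}
      = (fun x => i + x) '' ↑(AddSubgroup.zmultiples ((g : ℕ) : ZMod n)) := by
  have hn0 : 0 < n := Nat.pos_of_ne_zero (NeZero.ne n)
  ext j
  simp only [Set.mem_setOf_eq, Set.mem_image, SetLike.mem_coe,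
    AddSubgroup.mem_zmultiples_iff]
  constructor
  · rintro ⟨t, rfl⟩
    refine ⟨((t * g : ℕ) : ZMod n), ⟨(t : ℤ), ?_⟩, rfl⟩
    rw [zsmul_eq_mul]
    push_cast
    ring
  · rintro ⟨x, ⟨m, rfl⟩, rfl⟩
    refine ⟨(m % (n:ℤ)).toNat, ?_⟩
    have htn : (((m % (n:ℤ)).toNat : ℕ) : ℤ) = m % (n:ℤ) :=
      Int.toNat_of_nonneg (Int.emod_nonneg m (by exact_mod_cast hn0.ne'))
    have hcast : (((m % (n:ℤ)).toNat : ℕ) : ZMod n) = ((m : ℤ) : ZMod n) := by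
      have : (((m % (n:ℤ)).toNat : ℕ) : ZMod n) = (((m % (n:ℤ)).toNat : ℤ) : ZMod n) := by
        push_cast; ring
      rw [this, htn, ZMod.intCast_eq_intCast_iff]
      exact Int.emod_emod_of_dvd m dvd_rfl
    congr 1
    rw [zsmul_eq_mul]
    push_cast
    rw [hcast]

lemma card_cosets {n : ℕ} [NeZero n] (g : ℕ) (i : ZMod n) :
    {j : ZMod n | ∃ t : ℕ, j = i + ((t * g : ℕ) : ZMod n)}.ncard = n / Nat.gcd n g := by
  rw [coset_eq_zmultiples g i,
    Set.ncard_image_of_injective _ (add_right_injective i)]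
  rw [← Nat.card_coe_set_eq]
  have : Nat.card ↑(↑(AddSubgroup.zmultiples ((g : ℕ) : ZMod n)) : Set (ZMod n))
      = Nat.card (AddSubgroup.zmultiples ((g : ℕ) : ZMod n)) := rfl
  rw [this, Nat.card_zmultiples, ZMod.addOrderOf_coe g (NeZero.ne n)]

/-- Each warp thread (connected component of `Γ`) is a cycle with exactly
`n / gcd n s` vertices: every vertex has exactly two neighbours, and the
component of `i` is precisely the congruence class of `i` modulo `gcd n s`. -/
theorem stmt_6 (n s k r : ℕ) (hk : 0 < k) (hs : s = (n - 1) / k)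
    (hn : n = s * k + r) (hr1 : 1 ≤ r) (hrs : r < s) (hrk : r < k)
    (π : Equiv.Perm (ZMod n)) (hcf : ClashFree n s k π) :
    ∀ i : ZMod n,
      ((warpGraph n s k π).neighborSet i).ncard = 2 ∧
      {j : ZMod n | (warpGraph n s k π).Reachable i j}
        = {j : ZMod n | ∃ t : ℕ, j = i + ((t * Nat.gcd n s : ℕ) : ZMod n)} ∧
      {j : ZMod n | (warpGraph n s k π).Reachable i j}.ncard = n / Nat.gcd n s := by
  haveI : NeZero n := ⟨by omega⟩
  intro i
  have hEq : {j : ZMod n | (warpGraph n s k π).Reachable i j}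
      = {j : ZMod n | ∃ t : ℕ, j = i + ((t * Nat.gcd n s : ℕ) : ZMod n)} := by
    ext j
    simp only [Set.mem_setOf_eq]
    constructor
    · exact reach_forward hn hr1 hrs hrk π hcf
    · rintro ⟨t, rfl⟩
      exact reach_backward hn hr1 hrs hrk π hcf i t
  refine ⟨?_, hEq, ?_⟩
  · rw [neighbor_eq hn hr1 hrs hrk π hcf i]
    exact Set.ncard_pair (sub_ne_add hn hr1 hrs hrk π hcf i)
  · rw [hEq, card_cosets]
    congr 1
    exact Nat.gcd_eq_right (Nat.gcd_dvd_left n s)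
end

section
/- In the graph Δ on vertex set Z_n where i and j are joined when rectangles R_i and R_j touch on their top or bottom sides, each connected component (weft thread) is a cycle with exactly n/gcd(n,k) vertices, and for each component there is a fixed congruence class modulo gcd(n,k) containing π(i) for all vertices i of the component. -/
/-- The graph `Δ` joining `i` and `j` when rectangles `R_i` and `R_j`
touch on their top or bottom sides: `π j` is vertically `k` away from `π i`
and the horizontal projections (widths `s`) overlap. -/
def weftGraph (n s k : ℕ) (π : Equiv.Perm (ZMod n)) : SimpleGraph (ZMod n) :=
  SimpleGraph.fromRel (fun i j => (π j - π i).val = k ∧ circDist n i j < s)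

namespace Stmt7
open Finset

variable {n : ℕ}

lemma natCast_val [NeZero n] (a : ZMod n) : ((a.val : ℕ) : ZMod n) = a :=
  ZMod.natCast_rightInverse a

lemma val_sub_of_le [NeZero n] {a b : ZMod n} (h : b.val ≤ a.val) :
    (a - b).val = a.val - b.val := by
  have h2 : a - b = ((a.val - b.val : ℕ) : ZMod n) := by
    have := natCast_val a
    have := natCast_val b
    push_cast [Nat.cast_sub h]
    rw [natCast_val, natCast_val]
  rw [h2, ZMod.val_cast_of_lt]
  have := a.val_lt
  omega

lemma circDist_comm (a b : ZMod n) : circDist n a b = circDist n b a := by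
  unfold circDist; omega

lemma circDist_lt [NeZero n] {a b c : ZMod n} {L : ℕ} (ha : (c - a).val < L)
    (hb : (c - b).val < L) (hab : a ≠ b) : circDist n a b < L := by
  rcases le_total ((c - a).val) ((c - b).val) with h | h
  · have : a - b = (c - b) - (c - a) := by ring
    have hv : (a - b).val = (c - b).val - (c - a).val := by rw [this, val_sub_of_le h]
    have : circDist n a b ≤ (a - b).val := min_le_left _ _
    omega
  · have : b - a = (c - a) - (c - b) := by ring
    have hv : (b - a).val = (c - a).val - (c - b).val := by rw [this, val_sub_of_le h]
    have : circDist n a b ≤ (b - a).val := min_le_right _ _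
    omega

lemma card_interval [NeZero n] (a : ZMod n) {L : ℕ} (hL : L ≤ n) :
    (Finset.univ.filter fun x : ZMod n => (x - a).val < L).card = L := by
  classical
  have : (Finset.range L).card
      = (Finset.univ.filter fun x : ZMod n => (x - a).val < L).card := by
    refine Finset.card_bij (fun (t : ℕ) (_ : t ∈ Finset.range L) => a + (t : ZMod n)) ?_ ?_ ?_
    · intro t ht
      simp only [Finset.mem_range] at ht
      simp only [Finset.mem_filter, Finset.mem_univ, true_and]
      have h1 : a + (t:ZMod n) - a = (t : ZMod n) := by ring
      rw [h1, ZMod.val_cast_of_lt (by omega)]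
      omega
    · intro t ht u hu htu
      simp only [Finset.mem_range] at ht hu
      have h1 : (t : ZMod n) = (u : ZMod n) := by linear_combination htu
      have := congrArg ZMod.val h1
      rwa [ZMod.val_cast_of_lt (by omega), ZMod.val_cast_of_lt (by omega)] at this
    · intro x hx
      simp only [Finset.mem_filter, Finset.mem_univ, true_and] at hx
      refine ⟨(x - a).val, by simpa using hx, ?_⟩
      show a + (((x - a).val : ℕ) : ZMod n) = x
      rw [natCast_val]
      ring
  rw [← this, Finset.card_range]

lemma card_interval' [NeZero n] (a : ZMod n) {L : ℕ} (hL : L ≤ n) :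
    (Finset.univ.filter fun x : ZMod n => (a - x).val < L).card = L := by
  classical
  have : (Finset.univ.filter fun x : ZMod n => (a - x).val < L).card
      = (Finset.univ.filter fun y : ZMod n => (y - a).val < L).card := by
    refine Finset.card_bij (fun x _ => a + (a - x)) ?_ ?_ ?_
    · intro x hx
      simp only [Finset.mem_filter, Finset.mem_univ, true_and] at hx ⊢
      have h1 : a + (a - x) - a = a - x := by ring
      rw [h1]; exact hx
    · intro x _ y _ h
      have : a - x = a - y := by linear_combination h
      linear_combination -this
    · intro y hy
      simp only [Finset.mem_filter, Finset.mem_univ, true_and] at hy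
      refine ⟨a - (y - a), ?_, by ring⟩
      simp only [Finset.mem_filter, Finset.mem_univ, true_and]
      have h1 : a - (a - (y - a)) = y - a := by ring
      rw [h1]; exact hy
  rw [this, card_interval a hL]

lemma key {s k r : ℕ} {π : Equiv.Perm (ZMod n)} (hk : 0 < k)
    (hn : n = s * k + r) (hr1 : 1 ≤ r) (hrs : r < s) (hrk : r < k)
    (hcf : ClashFree n s k π) (i : ZMod n) :
    circDist n i (π.symm (π i + (k : ZMod n))) < s := by
  classical
  haveI : NeZero n := ⟨by nlinarith⟩
  by_contra hbad
  push_neg at hbad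
  have hs2 : 2 ≤ s := by omega
  have hk2 : 2 ≤ k := by omega
  have hkn : k < n := by nlinarith
  have hsn : s < n := by nlinarith
  -- coverage relation
  set cov : ZMod n → ZMod n → Prop :=
    fun p q => ∃ m, (p - m).val < s ∧ (q - π m).val < k with hcov
  -- column counts
  have hcol : ∀ p : ZMod n,
      (Finset.univ.filter fun q => cov p q).card = s * k := by
    intro p
    have heq : (Finset.univ.filter fun q => cov p q)
        = (Finset.univ.filter fun m : ZMod n => (p - m).val < s).biUnion
          (fun m => Finset.univ.filter fun q : ZMod n => (q - π m).val < k) := by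
      ext q
      simp only [hcov, Finset.mem_filter, Finset.mem_univ, true_and, Finset.mem_biUnion]
    rw [heq, Finset.card_biUnion]
    · rw [Finset.sum_congr rfl (fun m _ => card_interval (π m) hkn.le),
        Finset.sum_const, card_interval' p hsn.le, smul_eq_mul]
    · intro m hm m' hm' hne
      simp only [Finset.coe_filter, Set.mem_setOf_eq, Finset.mem_univ, true_and] at hm hm'
      have hclash := hcf m m' hne (circDist_lt hm hm' hne)
      rw [Function.onFun, Finset.disjoint_left]
      intro q hq hq'
      simp only [Finset.mem_filter, Finset.mem_univ, true_and] at hq hq'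
      have hπ : π m ≠ π m' := fun h => hne (π.injective h)
      have := circDist_lt hq hq' hπ
      omega
  -- row counts
  have hrow : ∀ q : ZMod n,
      (Finset.univ.filter fun p => cov p q).card ≤ s * k := by
    intro q
    have hsub : (Finset.univ.filter fun p => cov p q)
        ⊆ (Finset.univ.filter fun m : ZMod n => (q - π m).val < k).biUnion
          (fun m => Finset.univ.filter fun p : ZMod n => (p - m).val < s) := by
      intro p hp
      simp only [Finset.mem_filter, Finset.mem_univ, true_and, hcov] at hp
      simp only [Finset.mem_biUnion, Finset.mem_filter, Finset.mem_univ, true_and]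
      tauto
    have hK : (Finset.univ.filter fun m : ZMod n => (q - π m).val < k).card = k := by
      have hbij : (Finset.univ.filter fun m : ZMod n => (q - π m).val < k).card
          = (Finset.univ.filter fun w : ZMod n => (q - w).val < k).card := by
        refine Finset.card_bij (fun m _ => π m) ?_ ?_ ?_
        · intro m hm
          simp only [Finset.mem_filter, Finset.mem_univ, true_and] at hm ⊢
          exact hm
        · intro m _ m' _ h
          exact π.injective h
        · intro w hw
          simp only [Finset.mem_filter, Finset.mem_univ, true_and] at hw
          exact ⟨π.symm w, by simpa using hw, by simp⟩
      rw [hbij, card_interval' q hkn.le]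
    calc (Finset.univ.filter fun p => cov p q).card
        ≤ _ := Finset.card_le_card hsub
      _ ≤ ∑ m ∈ (Finset.univ.filter fun m : ZMod n => (q - π m).val < k),
            (Finset.univ.filter fun p : ZMod n => (p - m).val < s).card :=
          Finset.card_biUnion_le
      _ = k * s := by
          rw [Finset.sum_congr rfl (fun m _ => card_interval m hsn.le),
            Finset.sum_const, hK, smul_eq_mul]
      _ = s * k := Nat.mul_comm k s
  -- the bad row
  set v : ZMod n := π i + (k : ZMod n) with hv
  have hrowv : (Finset.univ.filter fun p => cov p v).card ≤ n - s := by
    have hsub : (Finset.univ.filter fun p => cov p v)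
        ⊆ Finset.univ.filter fun p : ZMod n => ¬ (p - i).val < s := by
      intro p hp
      simp only [Finset.mem_filter, Finset.mem_univ, true_and, hcov] at hp ⊢
      obtain ⟨m, h1, h2⟩ := hp
      intro h3
      by_cases hmi : m = i
      · subst hmi
        have : v - π m = (k : ZMod n) := by rw [hv]; ring
        rw [this, ZMod.val_cast_of_lt hkn] at h2
        omega
      · have hcd : circDist n i m < s := circDist_lt h3 h1 (fun h => hmi h.symm)
        have hclash := hcf i m (fun h => hmi h.symm) hcd
        set w := (v - π m).val with hw
        have hmv : π m = v - ((w : ℕ) : ZMod n) := by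
          rw [hw, natCast_val]; ring
        by_cases hw0 : w = 0
        · have : π m = v := by rw [hmv, hw0]; push_cast; ring
          have : m = π.symm v := by rw [← this, Equiv.symm_apply_apply]
          rw [this] at hcd
          omega
        · have hsub2 : π m - π i = ((k - w : ℕ) : ZMod n) := by
            rw [hmv, hv]
            push_cast [Nat.cast_sub h2.le]
            ring
          have hval : (π m - π i).val = k - w := by
            rw [hsub2, ZMod.val_cast_of_lt (by omega)]
          have : circDist n (π i) (π m) ≤ k - w := by
            rw [circDist]; rw [hval]; omega
          omega
    calc (Finset.univ.filter fun p => cov p v).card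
        ≤ (Finset.univ.filter fun p : ZMod n => ¬ (p - i).val < s).card :=
          Finset.card_le_card hsub
      _ = n - s := by
          rw [Finset.filter_not, Finset.card_sdiff_of_subset (Finset.filter_subset _ _),
            card_interval i hsn.le, Finset.card_univ, ZMod.card]
  -- double counting
  have hsum : ∑ p : ZMod n, (Finset.univ.filter fun q => cov p q).card
      = ∑ q : ZMod n, (Finset.univ.filter fun p => cov p q).card := by
    simp_rw [Finset.card_filter]
    exact Finset.sum_comm
  have hL : ∑ p : ZMod n, (Finset.univ.filter fun q => cov p q).card = n * (s * k) := by
    rw [Finset.sum_congr rfl (fun p _ => hcol p), Finset.sum_const, Finset.card_univ,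
      ZMod.card, smul_eq_mul]
  have hR : ∑ q : ZMod n, (Finset.univ.filter fun p => cov p q).card < n * (s * k) := by
    calc ∑ q : ZMod n, (Finset.univ.filter fun p => cov p q).card
        < ∑ _q : ZMod n, s * k := by
          refine Finset.sum_lt_sum (fun q _ => hrow q) ⟨v, Finset.mem_univ v, ?_⟩
          have : n - s < s * k := by omega
          omega
      _ = n * (s * k) := by
          rw [Finset.sum_const, Finset.card_univ, ZMod.card, smul_eq_mul]
  omega

lemma adj_iff {s k r : ℕ} {π : Equiv.Perm (ZMod n)} (hk : 0 < k)
    (hn : n = s * k + r) (hr1 : 1 ≤ r) (hrs : r < s) (hrk : r < k)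
    (hcf : ClashFree n s k π) (a b : ZMod n) :
    (weftGraph n s k π).Adj a b
      ↔ (π b = π a + (k : ZMod n) ∨ π a = π b + (k : ZMod n)) := by
  have hs2 : 2 ≤ s := by omega
  haveI : NeZero n := ⟨by nlinarith⟩
  have hkn : k < n := by nlinarith
  have hk0 : ((k : ℕ) : ZMod n) ≠ 0 := by
    intro h0
    rw [ZMod.natCast_eq_zero_iff] at h0
    exact absurd (Nat.le_of_dvd hk h0) (by omega)
  rw [weftGraph, SimpleGraph.fromRel_adj]
  constructor
  · rintro ⟨hne, ⟨hval, -⟩ | ⟨hval, -⟩⟩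
    · left
      have h1 : π b - π a = ((k : ℕ) : ZMod n) := by rw [← hval, natCast_val]
      linear_combination h1
    · right
      have h1 : π a - π b = ((k : ℕ) : ZMod n) := by rw [← hval, natCast_val]
      linear_combination h1
  · intro h
    rcases h with h | h
    · have hne : a ≠ b := by
        intro he; rw [he] at h; exact hk0 (by linear_combination -h)
      refine ⟨hne, Or.inl ⟨?_, ?_⟩⟩
      · rw [show π b - π a = ((k:ℕ) : ZMod n) from by linear_combination h,
          ZMod.val_cast_of_lt hkn]
      · have hb : b = π.symm (π a + (k : ZMod n)) := by rw [← h]; simp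
        rw [hb]; exact key hk hn hr1 hrs hrk hcf a
    · have hne : a ≠ b := by
        intro he; rw [he] at h; exact hk0 (by linear_combination -h)
      refine ⟨hne, Or.inr ⟨?_, ?_⟩⟩
      · rw [show π a - π b = ((k:ℕ) : ZMod n) from by linear_combination h,
          ZMod.val_cast_of_lt hkn]
      · have ha : a = π.symm (π b + (k : ZMod n)) := by rw [← h]; simp
        rw [ha]; exact key hk hn hr1 hrs hrk hcf b

lemma reach_fwd {s k r : ℕ} {π : Equiv.Perm (ZMod n)} (hk : 0 < k)
    (hn : n = s * k + r) (hr1 : 1 ≤ r) (hrs : r < s) (hrk : r < k)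
    (hcf : ClashFree n s k π) {i j : ZMod n}
    (h : (weftGraph n s k π).Reachable i j) :
    ∃ t : ℕ, π j = π i + ((t * k : ℕ) : ZMod n) := by
  have hs2 : 2 ≤ s := by omega
  haveI : NeZero n := ⟨by nlinarith⟩
  set g := Nat.gcd n k with hg
  have hgn : g ∣ n := Nat.gcd_dvd_left n k
  have hgk : g ∣ k := Nat.gcd_dvd_right n k
  have hg0 : 0 < g := Nat.gcd_pos_of_pos_right n hk
  set N := n / g with hN
  have hN1 : 1 ≤ N := Nat.one_le_div_iff hg0 |>.2 (Nat.le_of_dvd (by nlinarith) hgn)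
  have hNk : ((N * k : ℕ) : ZMod n) = 0 := by
    have h1 : N * k = n * (k / g) := by
      calc N * k = (n/g) * (g * (k/g)) := by rw [Nat.mul_div_cancel' hgk]
        _ = ((n/g) * g) * (k/g) := by ring
        _ = n * (k/g) := by rw [Nat.div_mul_cancel hgn]
    rw [h1]
    push_cast
    simp
  obtain ⟨w⟩ := h
  induction w with
  | nil => exact ⟨0, by simp⟩
  | cons hadj p ih =>
    rename_i u v _
    obtain ⟨t, ht⟩ := ih
    rcases (adj_iff hk hn hr1 hrs hrk hcf u v).1 hadj with h1 | h1
    · refine ⟨t + 1, ?_⟩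
      rw [ht, h1]
      push_cast
      ring
    · refine ⟨t + (N - 1), ?_⟩
      have hNk1 : (((N - 1) * k : ℕ) : ZMod n) = - ((k:ℕ) : ZMod n) := by
        have hNN : N * k = (N - 1) * k + k := by
          have h9 : N = (N - 1) + 1 := by omega
          calc N * k = ((N - 1) + 1) * k := by rw [← h9]
            _ = (N - 1) * k + k := by ring
        rw [hNN] at hNk
        push_cast at hNk ⊢
        linear_combination hNk
      have hsplit : (((t + (N - 1)) * k : ℕ) : ZMod n)
          = ((t * k : ℕ) : ZMod n) + (((N - 1) * k : ℕ) : ZMod n) := by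
        push_cast; ring
      rw [ht, hsplit, hNk1, h1]
      push_cast
      ring

lemma reach_bwd {s k r : ℕ} {π : Equiv.Perm (ZMod n)} (hk : 0 < k)
    (hn : n = s * k + r) (hr1 : 1 ≤ r) (hrs : r < s) (hrk : r < k)
    (hcf : ClashFree n s k π) (i : ZMod n) :
    ∀ (t : ℕ) (j : ZMod n), π j = π i + ((t * k : ℕ) : ZMod n) →
      (weftGraph n s k π).Reachable i j := by
  have hs2 : 2 ≤ s := by omega
  haveI : NeZero n := ⟨by nlinarith⟩
  intro t
  induction t with
  | zero =>
    intro j hj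
    simp only [Nat.zero_mul, Nat.cast_zero, add_zero] at hj
    exact Eq.mp (by rw [π.injective hj]) (SimpleGraph.Reachable.refl j)
  | succ t ih =>
    intro j hj
    set m := π.symm (π i + ((t * k : ℕ) : ZMod n)) with hm
    have hrm : (weftGraph n s k π).Reachable i m := ih m (by simp [hm])
    have hadj : (weftGraph n s k π).Adj m j := by
      rw [adj_iff hk hn hr1 hrs hrk hcf]
      left
      rw [hj]
      simp only [hm, Equiv.apply_symm_apply]
      push_cast
      ring
    exact hrm.trans hadj.reachable

lemma intCast_mod_cast (m : ℤ) [NeZero n] : (((m % (n:ℤ)).toNat : ℕ) : ZMod n) = ((m : ℤ) : ZMod n) := by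
  have hn0 : (0:ℤ) < (n:ℤ) := by exact_mod_cast Nat.pos_of_ne_zero (NeZero.ne n)
  have h1 : (((m % (n:ℤ)).toNat : ℤ) : ZMod n) = ((m % (n:ℤ) : ℤ) : ZMod n) := by
    rw [Int.toNat_of_nonneg (Int.emod_nonneg m hn0.ne')]
  have h2 : ((m % (n:ℤ) - m : ℤ) : ZMod n) = 0 := by
    rw [ZMod.intCast_zmod_eq_zero_iff_dvd]
    refine ⟨-(m / (n:ℤ)), ?_⟩
    have := Int.emod_def m (n:ℤ)
    linarith [Int.emod_def m (n:ℤ)]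
  push_cast at h1 h2 ⊢
  linear_combination h1 + h2

theorem stmt_7' (n s k r : ℕ) (hk : 0 < k)
    (hn : n = s * k + r) (hr1 : 1 ≤ r) (hrs : r < s) (hrk : r < k)
    (π : Equiv.Perm (ZMod n)) (hcf : ClashFree n s k π) :
    ∀ i : ZMod n,
      ((weftGraph n s k π).neighborSet i).ncard = 2 ∧
      {j : ZMod n | (weftGraph n s k π).Reachable i j}
        = {j : ZMod n | ∃ t : ℕ, π j = π i + ((t * Nat.gcd n k : ℕ) : ZMod n)} ∧
      {j : ZMod n | (weftGraph n s k π).Reachable i j}.ncard = n / Nat.gcd n k := by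
  intro i
  have hs2 : 2 ≤ s := by omega
  haveI : NeZero n := ⟨by nlinarith⟩
  have h2kn : 2 * k < n := by nlinarith
  set g := Nat.gcd n k with hg
  have hgn : g ∣ n := Nat.gcd_dvd_left n k
  have hgk : g ∣ k := Nat.gcd_dvd_right n k
  -- neighbour set
  have hne12 : π.symm (π i + (k : ZMod n)) ≠ π.symm (π i - (k : ZMod n)) := by
    intro h
    have h1 : π i + (k : ZMod n) = π i - (k : ZMod n) := π.symm.injective h
    have h2 : ((2 * k : ℕ) : ZMod n) = 0 := by push_cast; linear_combination h1
    rw [ZMod.natCast_eq_zero_iff] at h2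
    have := Nat.le_of_dvd (by omega) h2
    omega
  have hnb : (weftGraph n s k π).neighborSet i
      = {π.symm (π i + (k : ZMod n)), π.symm (π i - (k : ZMod n))} := by
    ext j
    simp only [SimpleGraph.mem_neighborSet, Set.mem_insert_iff, Set.mem_singleton_iff]
    rw [adj_iff hk hn hr1 hrs hrk hcf]
    constructor
    · rintro (h | h)
      · left; rw [Equiv.eq_symm_apply]; exact h
      · right; rw [Equiv.eq_symm_apply]; linear_combination -h
    · rintro (h | h)
      · left; rw [Equiv.eq_symm_apply] at h; exact h
      · right; rw [Equiv.eq_symm_apply] at h; linear_combination -h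
  refine ⟨by rw [hnb]; exact Set.ncard_pair hne12, ?_⟩
  -- the reachability set
  have hset : {j : ZMod n | (weftGraph n s k π).Reachable i j}
      = {j : ZMod n | ∃ t : ℕ, π j = π i + ((t * g : ℕ) : ZMod n)} := by
    ext j
    simp only [Set.mem_setOf_eq]
    constructor
    · intro h
      obtain ⟨t, ht⟩ := reach_fwd hk hn hr1 hrs hrk hcf h
      refine ⟨t * (k / g), ?_⟩
      rw [ht]
      congr 2
      rw [Nat.mul_assoc, Nat.div_mul_cancel hgk]
    · rintro ⟨t, ht⟩
      have hbez : ((g : ℕ) : ZMod n)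
          = ((k : ℕ) : ZMod n) * ((Nat.gcdB n k : ℤ) : ZMod n) := by
        have h := Nat.gcd_eq_gcd_ab n k
        have h2 : (((Nat.gcd n k : ℕ) : ℤ) : ZMod n)
            = (((n:ℤ) * Nat.gcdA n k + (k:ℤ) * Nat.gcdB n k : ℤ) : ZMod n) := by
          rw [← h]
        push_cast at h2
        rw [ZMod.natCast_self] at h2
        rw [← hg] at h2
        rw [h2]; ring
      set t' := ((t : ZMod n) * ((Nat.gcdB n k : ℤ) : ZMod n)).val with ht'
      apply reach_bwd hk hn hr1 hrs hrk hcf i t' j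
      rw [ht]
      congr 1
      push_cast
      rw [ht', natCast_val, hbez]
      ring
  refine ⟨hset, ?_⟩
  rw [hset]
  -- cardinality
  have h1 : {j : ZMod n | ∃ t : ℕ, π j = π i + ((t * g : ℕ) : ZMod n)}
      = ⇑π.symm '' ((fun x => π i + x) ''
          {x : ZMod n | ∃ t : ℕ, x = ((t * g : ℕ) : ZMod n)}) := by
    ext j
    simp only [Set.mem_image, Set.mem_setOf_eq]
    constructor
    · rintro ⟨t, ht⟩
      exact ⟨π i + ((t * g : ℕ) : ZMod n), ⟨_, ⟨t, rfl⟩, rfl⟩, by rw [← ht]; simp⟩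
    · rintro ⟨v, ⟨x, ⟨t, rfl⟩, rfl⟩, rfl⟩
      exact ⟨t, by simp⟩
  rw [h1, Set.ncard_image_of_injective _ π.symm.injective,
    Set.ncard_image_of_injective _ (add_right_injective (π i))]
  have h2 : {x : ZMod n | ∃ t : ℕ, x = ((t * g : ℕ) : ZMod n)}
      = ↑(AddSubgroup.zmultiples ((g : ℕ) : ZMod n)) := by
    ext x
    simp only [Set.mem_setOf_eq, SetLike.mem_coe, AddSubgroup.mem_zmultiples_iff]
    constructor
    · rintro ⟨t, rfl⟩
      refine ⟨(t : ℤ), ?_⟩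
      rw [zsmul_eq_mul]
      push_cast
      ring
    · rintro ⟨m, hm⟩
      refine ⟨(m % (n:ℤ)).toNat, ?_⟩
      rw [← hm, zsmul_eq_mul]
      push_cast
      rw [intCast_mod_cast]
  rw [h2]
  rw [← Nat.card_coe_set_eq]
  rw [show (Nat.card ↑(↑(AddSubgroup.zmultiples ((g : ℕ) : ZMod n)) : Set (ZMod n)))
      = Nat.card (AddSubgroup.zmultiples ((g : ℕ) : ZMod n)) from rfl]
  rw [Nat.card_zmultiples]
  rw [ZMod.addOrderOf_coe g (NeZero.ne n)]
  rw [Nat.gcd_comm n g, Nat.gcd_eq_left hgn]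

end Stmt7

/-- Each weft thread (connected component of `Δ`) is a cycle with exactly
`n / gcd n k` vertices: every vertex has exactly two neighbours, and the
component of `i` consists of the `j` with `π j` in the congruence class
of `π i` modulo `gcd n k`. -/
theorem stmt_7 (n s k r : ℕ) (hk : 0 < k)
    (hn : n = s * k + r) (hr1 : 1 ≤ r) (hrs : r < s) (hrk : r < k)
    (π : Equiv.Perm (ZMod n)) (hcf : ClashFree n s k π) :
    ∀ i : ZMod n,
      ((weftGraph n s k π).neighborSet i).ncard = 2 ∧
      {j : ZMod n | (weftGraph n s k π).Reachable i j}
        = {j : ZMod n | ∃ t : ℕ, π j = π i + ((t * Nat.gcd n k : ℕ) : ZMod n)} ∧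
      {j : ZMod n | (weftGraph n s k π).Reachable i j}.ncard = n / Nat.gcd n k := by
  exact Stmt7.stmt_7' n s k r hk hn hr1 hrs hrk π hcf
end

section
/- With n = sk + r, d_s = gcd(n,s), d_k = gcd(n,k), d_sd_k | n, and ((a_i),(b_i)) an (s,k,n)-jumper with σ_a = Σ_{i=0}^{d_s-1} a_i and σ_b = Σ_{i=0}^{d_k-1} b_i, we have gcd(n/(d_sd_k), σ_b/(d_sd_k)) = 1. -/
/-- An `(s,k,n)`-jumper: a pair of sequences `(aSeq, bSeq)` with periods
dividing `d_s = gcd(n,s)` and `d_k = gcd(n,k)` respectively, entries in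
`[1,s)` resp. `[1,k)`, distinct partial sums modulo `d_s` resp. `d_k`,
`d_s d_k` dividing both total sums `σ_a`, `σ_b`, and `σ_a σ_b = d_s d_k r`. -/
structure Jumper (n s k r : ℕ) where
  aSeq : ℕ → ℕ
  bSeq : ℕ → ℕ
  ha_per : ∀ i, aSeq (i + Nat.gcd n s) = aSeq i
  hb_per : ∀ i, bSeq (i + Nat.gcd n k) = bSeq i
  ha_lb : ∀ i, 1 ≤ aSeq i
  ha_ub : ∀ i, aSeq i < s
  hb_lb : ∀ i, 1 ≤ bSeq i
  hb_ub : ∀ i, bSeq i < k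
  hb_distinct : ∀ l l' : ℕ, l < Nat.gcd n k → l' < Nat.gcd n k →
    (∑ i ∈ Finset.range l, bSeq i) % Nat.gcd n k
      = (∑ i ∈ Finset.range l', bSeq i) % Nat.gcd n k → l = l'
  hb_div : Nat.gcd n s * Nat.gcd n k ∣ ∑ i ∈ Finset.range (Nat.gcd n k), bSeq i
  ha_distinct : ∀ m m' : ℕ, m < Nat.gcd n s → m' < Nat.gcd n s →
    (∑ i ∈ Finset.range m, aSeq i) % Nat.gcd n s
      = (∑ i ∈ Finset.range m', aSeq i) % Nat.gcd n s → m = m'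
  ha_div : Nat.gcd n s * Nat.gcd n k ∣ ∑ i ∈ Finset.range (Nat.gcd n s), aSeq i
  hprod : (∑ i ∈ Finset.range (Nat.gcd n s), aSeq i)
      * (∑ i ∈ Finset.range (Nat.gcd n k), bSeq i)
      = Nat.gcd n s * Nat.gcd n k * r

/-- With an `(s,k,n)`-jumper, `gcd(n/(d_s d_k), σ_b/(d_s d_k)) = 1`. -/
theorem stmt_14 (n k s r : ℕ) (hk : 0 < k) (hkn : k < n)
    (hs : s = (n - 1) / k) (hn : n = s * k + r) (hr1 : 1 ≤ r) (hrk : r ≤ k)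
    (hdvd : Nat.gcd n s * Nat.gcd n k ∣ n) (J : Jumper n s k r) :
    Nat.gcd (n / (Nat.gcd n s * Nat.gcd n k))
      ((∑ i ∈ Finset.range (Nat.gcd n k), J.bSeq i)
        / (Nat.gcd n s * Nat.gcd n k)) = 1 := by
  have hn0 : 0 < n := lt_trans hk hkn
  have hds0 : 0 < Nat.gcd n s := Nat.gcd_pos_of_pos_left _ hn0
  have hdk0 : 0 < Nat.gcd n k := Nat.gcd_pos_of_pos_left _ hn0
  have hD0 : 0 < Nat.gcd n s * Nat.gcd n k := Nat.mul_pos hds0 hdk0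
  obtain ⟨a', ha'⟩ := J.ha_div
  obtain ⟨b', hb'⟩ := J.hb_div
  obtain ⟨m, hm⟩ := hdvd
  have h2 : Nat.gcd n s * Nat.gcd n k * (Nat.gcd n s * Nat.gcd n k * (a' * b'))
      = Nat.gcd n s * Nat.gcd n k * r := by
    rw [← J.hprod, ha', hb']; ring
  have hr' : Nat.gcd n s * Nat.gcd n k * (a' * b') = r :=
    Nat.eq_of_mul_eq_mul_left hD0 h2
  rw [hb', Nat.mul_div_cancel_left _ hD0]
  by_contra hg
  obtain ⟨p, hp, hpg⟩ := Nat.exists_prime_and_dvd hg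
  have hpn : p ∣ n / (Nat.gcd n s * Nat.gcd n k) := hpg.trans (Nat.gcd_dvd_left _ _)
  have hpb : p ∣ b' := hpg.trans (Nat.gcd_dvd_right _ _)
  have hmn : n / (Nat.gcd n s * Nat.gcd n k) = m :=
    Nat.div_eq_of_eq_mul_right hD0 hm
  have hpm : p ∣ m := hmn ▸ hpn
  -- p * D divides n and r, hence n - r = s * k
  have hpDn : Nat.gcd n s * Nat.gcd n k * p ∣ n := by
    have := mul_dvd_mul_left (Nat.gcd n s * Nat.gcd n k) hpm
    rwa [← hm] at this
  have hpDr : Nat.gcd n s * Nat.gcd n k * p ∣ r := by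
    rw [← hr']
    exact mul_dvd_mul_left _ (hpb.trans (dvd_mul_left _ _))
  have hsk : n - r = s * k := by rw [hn]; simp
  have hpDsk : Nat.gcd n s * Nat.gcd n k * p ∣ s * k := hsk ▸ Nat.dvd_sub hpDn hpDr
  -- s*k/(ds*dk) = (s/ds)*(k/dk)
  have hq : s / Nat.gcd n s * (k / Nat.gcd n k)
      = s * k / (Nat.gcd n s * Nat.gcd n k) :=
    Nat.div_mul_div_comm (Nat.gcd_dvd_right n s) (Nat.gcd_dvd_right n k)
  have hDsk : Nat.gcd n s * Nat.gcd n k ∣ s * k := (dvd_mul_right _ p).trans hpDsk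
  obtain ⟨c, hc⟩ := hpDsk
  have hc' : s * k = Nat.gcd n s * Nat.gcd n k * (p * c) := hc.trans (by ring)
  have hpq : p ∣ s / Nat.gcd n s * (k / Nat.gcd n k) := by
    rw [hq, hc', Nat.mul_div_cancel_left _ hD0]
    exact dvd_mul_right p c
  have hpns : p ∣ n / Nat.gcd n s := by
    have h : n / Nat.gcd n s = Nat.gcd n k * m :=
      Nat.div_eq_of_eq_mul_right hds0 (hm.trans (by ring))
    rw [h]; exact hpm.mul_left _
  have hpnk : p ∣ n / Nat.gcd n k := by
    have h : n / Nat.gcd n k = Nat.gcd n s * m :=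
      Nat.div_eq_of_eq_mul_right hdk0 (hm.trans (by ring))
    rw [h]; exact hpm.mul_left _
  rcases hp.dvd_mul.mp hpq with h | h
  · have hco : Nat.Coprime (n / Nat.gcd n s) (s / Nat.gcd n s) :=
      Nat.coprime_div_gcd_div_gcd hds0
    exact hp.ne_one (Nat.eq_one_of_dvd_one (hco ▸ Nat.dvd_gcd hpns h))
  · have hco : Nat.Coprime (n / Nat.gcd n k) (k / Nat.gcd n k) :=
      Nat.coprime_div_gcd_div_gcd hdk0
    exact hp.ne_one (Nat.eq_one_of_dvd_one (hco ▸ Nat.dvd_gcd hpnk h))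
end

section
/- Suppose n = sk + r with 1 ≤ r < s, r < k, s = ⌊(n-1)/k⌋, and d_sd_k | n where d_s = gcd(n,s), d_k = gcd(n,k). Then an (s,k,n)-jumper exists. In particular, writing r/(d_sd_k) = r_a·r_b, the sequences with a_0 = d_sd_k r_a - (d_s - 1), a_1 = ... = a_{d_s-1} = 1 (period d_s) and b_0 = d_sd_k r_b - (d_k - 1), b_1 = ... = b_{d_k-1} = 1 (period d_k) form an (s,k,n)-jumper. -/
lemma jumper_sum_aux (d B : ℕ) : ∀ l, l ≤ d →
    (∑ i ∈ Finset.range l, (if i % d = 0 then B else 1))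
      = if l = 0 then 0 else B + (l - 1) := by
  intro l hl
  induction l with
  | zero => simp
  | succ m ih =>
    rw [Finset.sum_range_succ, ih (by omega)]
    have hm : m % d = m := Nat.mod_eq_of_lt (by omega)
    rcases Nat.eq_zero_or_pos m with h | h
    · subst h; simp
    · have hm0 : m ≠ 0 := by omega
      rw [hm, if_neg hm0, if_neg hm0, if_neg (by omega : ¬ m + 1 = 0)]
      omega


/-- Under the standing assumptions an `(s,k,n)`-jumper exists; in particular,
for any factorisation `r/(d_s d_k) = r_a · r_b`, the pair of sequences with
`a_0 = d_s d_k r_a - (d_s - 1)`, `a_i = 1` otherwise (period `d_s`), and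
`b_0 = d_s d_k r_b - (d_k - 1)`, `b_i = 1` otherwise (period `d_k`),
is an `(s,k,n)`-jumper. -/
theorem stmt_15 (n k s r : ℕ) (hk : 0 < k) (hkn : k < n)
    (hs : s = (n - 1) / k) (hn : n = s * k + r) (hr1 : 1 ≤ r)
    (hrk : r < k) (hrs : r < s)
    (hdvd : Nat.gcd n s * Nat.gcd n k ∣ n) :
    Nonempty (Jumper n s k r) ∧
    ∀ ra rb : ℕ, 0 < ra → 0 < rb →
      ra * rb = r / (Nat.gcd n s * Nat.gcd n k) →
      ∃ J : Jumper n s k r,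
        (∀ i, J.aSeq i = if i % Nat.gcd n s = 0
          then Nat.gcd n s * Nat.gcd n k * ra - (Nat.gcd n s - 1) else 1) ∧
        (∀ i, J.bSeq i = if i % Nat.gcd n k = 0
          then Nat.gcd n s * Nat.gcd n k * rb - (Nat.gcd n k - 1) else 1) := by
  set ds := Nat.gcd n s with hds_def
  set dk := Nat.gcd n k with hdk_def
  have hn0 : 0 < n := by omega
  have hds : 0 < ds := Nat.gcd_pos_of_pos_left s hn0
  have hdk : 0 < dk := Nat.gcd_pos_of_pos_left k hn0
  have hdds : ds ∣ s := Nat.gcd_dvd_right n s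
  have hddk : dk ∣ k := Nat.gcd_dvd_right n k
  have hr : ds * dk ∣ r := by
    have h1 : ds * dk ∣ s * k := mul_dvd_mul hdds hddk
    have h2 : r = n - s * k := by omega
    rw [h2]; exact Nat.dvd_sub hdvd h1
  have key : ∀ ra rb : ℕ, 0 < ra → 0 < rb →
      ra * rb = r / (ds * dk) →
      ∃ J : Jumper n s k r,
        (∀ i, J.aSeq i = if i % ds = 0 then ds * dk * ra - (ds - 1) else 1) ∧
        (∀ i, J.bSeq i = if i % dk = 0 then ds * dk * rb - (dk - 1) else 1) := by
    intro ra rb hra hrb hrab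
    have hr' : r = ds * dk * (ra * rb) := by
      rw [hrab, Nat.mul_div_cancel' hr]
    set A := ds * dk * ra with hA
    set B := ds * dk * rb with hB
    have hAr : A ≤ r := by
      have h1 : A * rb = r := by rw [hr', hA]; ring
      exact le_trans (Nat.le_mul_of_pos_right A hrb) h1.le
    have hBr : B ≤ r := by
      have h1 : B * ra = r := by rw [hr', hB]; ring
      exact le_trans (Nat.le_mul_of_pos_right B hra) h1.le
    have hdsA : ds ≤ A := by
      have : ds * 1 ≤ ds * (dk * ra) :=
        Nat.mul_le_mul_left ds (Nat.mul_pos hdk hra)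
      calc ds = ds * 1 := by ring
        _ ≤ ds * (dk * ra) := this
        _ = A := by rw [hA]; ring
    have hdkB : dk ≤ B := by
      have : dk * 1 ≤ dk * (ds * rb) :=
        Nat.mul_le_mul_left dk (Nat.mul_pos hds hrb)
      calc dk = dk * 1 := by ring
        _ ≤ dk * (ds * rb) := this
        _ = B := by rw [hB]; ring
    have hsum_a : ∀ l, l ≤ ds →
        (∑ i ∈ Finset.range l, (if i % ds = 0 then A - (ds - 1) else 1))
          = if l = 0 then 0 else (A - (ds - 1)) + (l - 1) :=
      fun l hl => jumper_sum_aux ds _ l hl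
    have hsum_b : ∀ l, l ≤ dk →
        (∑ i ∈ Finset.range l, (if i % dk = 0 then B - (dk - 1) else 1))
          = if l = 0 then 0 else (B - (dk - 1)) + (l - 1) :=
      fun l hl => jumper_sum_aux dk _ l hl
    have hmod_a : ∀ l, l < ds →
        (∑ i ∈ Finset.range l, (if i % ds = 0 then A - (ds - 1) else 1)) % ds = l := by
      intro l hl
      rw [hsum_a l hl.le]
      rcases Nat.eq_zero_or_pos l with h | h
      · simp [h]
      · rw [if_neg (by omega)]
        obtain ⟨c, hc⟩ : ds ∣ A := ⟨dk * ra, by rw [hA]; ring⟩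
        have hc1 : 1 ≤ c := by
          by_contra hcon
          have : c = 0 := by omega
          rw [this, mul_zero] at hc
          omega
        obtain ⟨c', rfl⟩ : ∃ c', c = c' + 1 := ⟨c - 1, by omega⟩
        have hc2 : A = ds * c' + ds := by rw [hc]; ring
        have he : A - (ds - 1) + (l - 1) = ds * c' + l := by omega
        rw [he, Nat.mul_add_mod]
        exact Nat.mod_eq_of_lt hl
    have hmod_b : ∀ l, l < dk →
        (∑ i ∈ Finset.range l, (if i % dk = 0 then B - (dk - 1) else 1)) % dk = l := by
      intro l hl
      rw [hsum_b l hl.le]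
      rcases Nat.eq_zero_or_pos l with h | h
      · simp [h]
      · rw [if_neg (by omega)]
        obtain ⟨c, hc⟩ : dk ∣ B := ⟨ds * rb, by rw [hB]; ring⟩
        have hc1 : 1 ≤ c := by
          by_contra hcon
          have : c = 0 := by omega
          rw [this, mul_zero] at hc
          omega
        obtain ⟨c', rfl⟩ : ∃ c', c = c' + 1 := ⟨c - 1, by omega⟩
        have hc2 : B = dk * c' + dk := by rw [hc]; ring
        have he : B - (dk - 1) + (l - 1) = dk * c' + l := by omega
        rw [he, Nat.mul_add_mod]
        exact Nat.mod_eq_of_lt hl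
    refine ⟨⟨fun i => if i % ds = 0 then A - (ds - 1) else 1,
            fun i => if i % dk = 0 then B - (dk - 1) else 1,
            ?_, ?_, ?_, ?_, ?_, ?_, ?_, ?_, ?_, ?_, ?_⟩,
           fun i => rfl, fun i => rfl⟩
    · intro i; simp [← hds_def, Nat.add_mod_right]
    · intro i; simp [← hdk_def, Nat.add_mod_right]
    · intro i; split <;> omega
    · intro i; split <;> omega
    · intro i; split <;> omega
    · intro i; split <;> omega
    · intro l l' hl hl' h
      rw [hmod_b l hl, hmod_b l' hl'] at h
      exact h
    · rw [hsum_b dk le_rfl, if_neg (by omega : ¬ dk = 0),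
        show B - (dk - 1) + (dk - 1) = B from by omega]
      exact ⟨rb, hB⟩
    · intro m m' hm hm' h
      rw [hmod_a m hm, hmod_a m' hm'] at h
      exact h
    · rw [hsum_a ds le_rfl, if_neg (by omega : ¬ ds = 0),
        show A - (ds - 1) + (ds - 1) = A from by omega]
      exact ⟨ra, hA⟩
    · rw [hsum_a ds le_rfl, hsum_b dk le_rfl,
        if_neg (by omega : ¬ ds = 0), if_neg (by omega : ¬ dk = 0),
        show A - (ds - 1) + (ds - 1) = A from by omega,
        show B - (dk - 1) + (dk - 1) = B from by omega,
        hr', hA, hB]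
      ring
  refine ⟨?_, key⟩
  have hq : 0 < r / (ds * dk) :=
    Nat.div_pos (Nat.le_of_dvd (by omega) hr) (by positivity)
  obtain ⟨J, -, -⟩ := key (r / (ds * dk)) 1 hq one_pos (mul_one _)
  exact ⟨J⟩
end

section
/- Let ((a_i),(b_i)) be an (s,k,n)-jumper (with d_sd_k | n, n = sk+r, r < s, r < k). The map π: Z_n → Z_n defined by π((αd_k + ℓ)s + Σ_{i=0}^{m-1} a_i) = mk - Σ_{i=0}^{ℓ-1} b_i - α σ_b (for 0 ≤ m < d_s, 0 ≤ ℓ < d_k, 0 ≤ α < n/(d_sd_k)) is a well-defined bijection of Z_n. -/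
lemma aux_lt_mul {a b A B : ℕ} (ha : a < A) (hb : b < B) : a * B + b < A * B := by
  calc a * B + b < a * B + B := by omega
    _ = (a + 1) * B := by ring
    _ ≤ A * B := Nat.mul_le_mul_right B ha

lemma aux_cancel {d a b l l' : ℕ} (h : a * d + l = b * d + l') (hl : l < d)
    (hl' : l' < d) : a = b ∧ l = l' := by
  have h1 : l = l' := by
    have e := congrArg (· % d) h
    rw [Nat.add_comm (a*d) l, Nat.add_comm (b*d) l', Nat.add_mul_mod_self_right,
      Nat.add_mul_mod_self_right, Nat.mod_eq_of_lt hl, Nat.mod_eq_of_lt hl'] at e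
    exact e
  subst h1
  have hd : 0 < d := by omega
  exact ⟨Nat.eq_of_mul_eq_mul_right hd (by omega), rfl⟩

lemma aux_eq_of_dvd {d x y : ℕ} (hx : x < d) (hy : y < d)
    (h : (d : ℤ) ∣ (x : ℤ) - y) : x = y := by
  have h2 : y ≡ x [MOD d] := (Nat.modEq_iff_dvd).mpr h
  have h3 := h2
  unfold Nat.ModEq at h3
  rw [Nat.mod_eq_of_lt hy, Nat.mod_eq_of_lt hx] at h3
  omega

lemma aux_pos {ds dk N n : ℕ} (hn : ds * dk * N = n) (hn0 : 0 < n) :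
    0 < ds ∧ 0 < dk ∧ 0 < N := by
  rcases Nat.eq_zero_or_pos ds with h | h
  · subst h; simp at hn; omega
  rcases Nat.eq_zero_or_pos dk with h2 | h2
  · subst h2; simp at hn; omega
  rcases Nat.eq_zero_or_pos N with h3 | h3
  · subst h3; simp at hn; omega
  exact ⟨h, h2, h3⟩

lemma inj_g {n s ds dk N s1 : ℕ} (A : ℕ → ℕ)
    (hn0 : 0 < n) (hn : ds * dk * N = n) (hs1 : s = ds * s1)
    (hcop : Nat.Coprime (dk * N) s1)
    (hdist : ∀ m m' : ℕ, m < ds → m' < ds → A m % ds = A m' % ds → m = m')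
    {α α' l l' m m' : ℕ}
    (hα : α < N) (hα' : α' < N) (hl : l < dk) (hl' : l' < dk)
    (hm : m < ds) (hm' : m' < ds)
    (heq : (((α * dk + l) * s + A m : ℕ) : ZMod n)
      = (((α' * dk + l') * s + A m' : ℕ) : ZMod n)) :
    α = α' ∧ l = l' ∧ m = m' := by
  obtain ⟨hds0, hdk0, hN0⟩ := aux_pos hn hn0
  have hmod := (ZMod.natCast_eq_natCast_iff _ _ _).mp heq
  have E : (n : ℤ) ∣ (((α' : ℤ) * dk + l') * s + A m')
      - (((α : ℤ) * dk + l) * s + A m) := by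
    have E0 := (Nat.modEq_iff_dvd).mp hmod
    push_cast at E0
    exact E0
  have hds_n : (ds : ℤ) ∣ n := ⟨dk * N, by push_cast [← hn]; ring⟩
  have hds_s : (ds : ℤ) ∣ s := ⟨s1, by push_cast [hs1]; ring⟩
  -- step 1 : m = m'
  have E1 : (ds : ℤ) ∣ (A m' : ℤ) - A m := by
    have h1 := dvd_trans hds_n E
    have h2 : (ds : ℤ) ∣ (((α' : ℤ) * dk + l') - ((α : ℤ) * dk + l)) * s :=
      Dvd.dvd.mul_left hds_s _
    have h3 := h1.sub h2
    convert h3 using 1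
    · rfl
    ring
  have hmm : m = m' := hdist m m' hm hm' ((Nat.modEq_iff_dvd).mpr E1)
  subst hmm
  -- step 2 : cancel s
  have E2 : ((dk * N : ℕ) : ℤ) ∣ (((α' : ℤ) * dk + l') - ((α : ℤ) * dk + l)) * s1 := by
    have hD : ((dk * N : ℕ) : ℤ) = (dk : ℤ) * N := by push_cast; ring
    have hS : (s : ℤ) = (ds : ℤ) * s1 := by push_cast [hs1]; ring
    have E2' : ((ds : ℤ) * ((dk * N : ℕ) : ℤ)) ∣
        (ds : ℤ) * ((((α' : ℤ) * dk + l') - ((α : ℤ) * dk + l)) * s1) := by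
      obtain ⟨t, ht⟩ := E
      refine ⟨t, ?_⟩
      push_cast [← hn] at ht
      linear_combination ht - (((α' : ℤ) * dk + l') - ((α : ℤ) * dk + l)) * hS
        - (ds : ℤ) * t * hD
    have hne : (ds : ℤ) ≠ 0 := by positivity
    exact (mul_dvd_mul_iff_left hne).mp E2'
  have hic : IsCoprime ((dk * N : ℕ) : ℤ) ((s1 : ℕ) : ℤ) :=
    Nat.isCoprime_iff_coprime.mpr hcop
  have E3 : ((dk * N : ℕ) : ℤ) ∣ ((α' * dk + l' : ℕ) : ℤ) - ((α * dk + l : ℕ) : ℤ) := by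
    push_cast
    exact hic.dvd_of_dvd_mul_right E2
  have hlt1 : α * dk + l < dk * N := by
    have := aux_lt_mul hα hl; rw [Nat.mul_comm N dk] at this; exact this
  have hlt2 : α' * dk + l' < dk * N := by
    have := aux_lt_mul hα' hl'; rw [Nat.mul_comm N dk] at this; exact this
  have hc : α' * dk + l' = α * dk + l := aux_eq_of_dvd hlt2 hlt1 E3
  obtain ⟨h1, h2⟩ := aux_cancel hc hl' hl
  exact ⟨h1.symm, h2.symm, rfl⟩

lemma inj_h {n k ds dk N k1 v σb : ℕ} (B : ℕ → ℕ)
    (hn0 : 0 < n) (hn : ds * dk * N = n) (hk1 : k = dk * k1) (hσb : σb = ds * dk * v)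
    (hcop1 : Nat.Coprime ds k1) (hcop2 : Nat.Coprime N v)
    (hdist : ∀ l l' : ℕ, l < dk → l' < dk → B l % dk = B l' % dk → l = l')
    {α α' l l' m m' : ℕ}
    (hα : α < N) (hα' : α' < N) (hl : l < dk) (hl' : l' < dk)
    (hm : m < ds) (hm' : m' < ds)
    (heq : ((m * k : ℕ) : ZMod n) - ((B l : ℕ) : ZMod n) - ((α * σb : ℕ) : ZMod n)
      = ((m' * k : ℕ) : ZMod n) - ((B l' : ℕ) : ZMod n) - ((α' * σb : ℕ) : ZMod n)) :
    α = α' ∧ l = l' ∧ m = m' := by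
  obtain ⟨hds0, hdk0, hN0⟩ := aux_pos hn hn0
  have heq' : (((m * k : ℤ) - (B l : ℤ) - (α * σb : ℤ) : ℤ) : ZMod n)
      = (((m' * k : ℤ) - (B l' : ℤ) - (α' * σb : ℤ) : ℤ) : ZMod n) := by
    push_cast
    push_cast at heq
    exact heq
  have E : (n : ℤ) ∣ ((m' * k : ℤ) - (B l' : ℤ) - (α' * σb : ℤ))
      - ((m * k : ℤ) - (B l : ℤ) - (α * σb : ℤ)) :=
    ((ZMod.intCast_eq_intCast_iff _ _ _).mp heq').dvd
  have hdk_n : (dk : ℤ) ∣ n := ⟨ds * N, by push_cast [← hn]; ring⟩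
  have hdk_k : (dk : ℤ) ∣ k := ⟨k1, by push_cast [hk1]; ring⟩
  have hdk_σ : (dk : ℤ) ∣ σb := ⟨ds * v, by push_cast [hσb]; ring⟩
  -- step 1 : l = l'
  have E1 : (dk : ℤ) ∣ (B l : ℤ) - B l' := by
    have h1 := dvd_trans hdk_n E
    have h2 : (dk : ℤ) ∣ ((m' : ℤ) - m) * k := hdk_k.mul_left _
    have h3 : (dk : ℤ) ∣ ((α : ℤ) - α') * σb := hdk_σ.mul_left _
    have h4 := (h1.sub h2).sub h3
    convert h4 using 1
    · rfl
    ring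
  have hll : l' = l := hdist l' l hl' hl ((Nat.modEq_iff_dvd).mpr E1)
  subst hll
  -- step 2 : m = m'
  have E2 : (ds : ℤ) ∣ ((m' : ℤ) - m) * k1 := by
    have hD_n : ((dk : ℤ) * ds) ∣ n := ⟨N, by push_cast [← hn]; ring⟩
    have hD_σ : ((dk : ℤ) * ds) ∣ σb := ⟨v, by push_cast [hσb]; ring⟩
    have h1 := dvd_trans hD_n E
    have h2 : ((dk : ℤ) * ds) ∣ ((α : ℤ) - α') * σb := hD_σ.mul_left _
    have h3 : ((dk : ℤ) * ds) ∣ (dk : ℤ) * (((m' : ℤ) - m) * k1) := by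
      have h4 := h1.sub h2
      convert h4 using 1
      · rfl
      push_cast [hk1]
      ring
    exact (mul_dvd_mul_iff_left (show (dk : ℤ) ≠ 0 by positivity)).mp h3
  have hmm : m = m' := by
    have hic : IsCoprime ((ds : ℕ) : ℤ) ((k1 : ℕ) : ℤ) :=
      Nat.isCoprime_iff_coprime.mpr hcop1
    exact (aux_eq_of_dvd hm' hm (hic.dvd_of_dvd_mul_right E2)).symm
  subst hmm
  -- step 3 : α = α'
  have E3 : (N : ℤ) ∣ ((α : ℤ) - α') * v := by
    have h1 : (((ds : ℤ) * dk) * N) ∣ ((ds : ℤ) * dk) * (((α : ℤ) - α') * v) := by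
      obtain ⟨t, ht⟩ := E
      refine ⟨t, ?_⟩
      push_cast [hσb, ← hn] at ht ⊢
      linear_combination ht
    exact (mul_dvd_mul_iff_left (show ((ds : ℤ) * dk) ≠ 0 by positivity)).mp h1
  have hαα : α = α' :=
    aux_eq_of_dvd hα hα' ((Nat.isCoprime_iff_coprime.mpr hcop2).dvd_of_dvd_mul_right E3)
  exact ⟨hαα, rfl, rfl⟩

/-- The map `(α d_k + ℓ) s + Σ_{i<m} a_i ↦ m k - Σ_{i<ℓ} b_i - α σ_b`
determined by an `(s,k,n)`-jumper is a well-defined bijection of `ZMod n`. -/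
theorem stmt_16 (n k s r : ℕ) (hk : 0 < k) (hkn : k < n)
    (hs : s = (n - 1) / k) (hn : n = s * k + r) (hr1 : 1 ≤ r)
    (hrk : r < k) (hrs : r < s)
    (hdvd : Nat.gcd n s * Nat.gcd n k ∣ n) (J : Jumper n s k r) :
    ∃ π : Equiv.Perm (ZMod n),
      ∀ α l m : ℕ,
        α < n / (Nat.gcd n s * Nat.gcd n k) →
        l < Nat.gcd n k → m < Nat.gcd n s →
        π (((α * Nat.gcd n k + l) * s + ∑ i ∈ Finset.range m, J.aSeq i : ℕ)
            : ZMod n)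
          = ((m * k : ℕ) : ZMod n)
            - ((∑ i ∈ Finset.range l, J.bSeq i : ℕ) : ZMod n)
            - ((α * ∑ i ∈ Finset.range (Nat.gcd n k), J.bSeq i : ℕ) : ZMod n) := by
  have hn0 : 0 < n := by omega
  haveI : NeZero n := ⟨by omega⟩
  set ds := Nat.gcd n s with hds
  set dk := Nat.gcd n k with hdk
  set N := n / (ds * dk) with hN
  set σa := ∑ i ∈ Finset.range ds, J.aSeq i with hσa
  set σb := ∑ i ∈ Finset.range dk, J.bSeq i with hσb
  set u := σa / (ds * dk) with hu
  set v := σb / (ds * dk) with hv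
  set s1 := s / ds with hs1def
  set k1 := k / dk with hk1def
  -- basic facts
  have hds0 : 0 < ds := Nat.gcd_pos_of_pos_left s hn0
  have hdk0 : 0 < dk := Nat.gcd_pos_of_pos_left k hn0
  have hdsdkN : ds * dk * N = n := Nat.mul_div_cancel' hdvd
  have hs1 : s = ds * s1 := (Nat.mul_div_cancel' (Nat.gcd_dvd_right n s)).symm
  have hk1 : k = dk * k1 := (Nat.mul_div_cancel' (Nat.gcd_dvd_right n k)).symm
  have hσau : σa = ds * dk * u := (Nat.mul_div_cancel' J.ha_div).symm
  have hσbv : σb = ds * dk * v := (Nat.mul_div_cancel' J.hb_div).symm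
  have hD0 : 0 < ds * dk := Nat.mul_pos hds0 hdk0
  have hN0 : 0 < N := Nat.div_pos (Nat.le_of_dvd hn0 hdvd) hD0
  -- r = ds * dk * (u * v)
  have hruv : ds * dk * (u * v) = r := by
    have hp : σa * σb = ds * dk * r := by
      have := J.hprod; rwa [← hds, ← hdk] at this
    have h2 : ds * dk * (ds * dk * (u * v)) = ds * dk * r := by
      rw [← hp, hσau, hσbv]; ring
    exact Nat.eq_of_mul_eq_mul_left hD0 h2
  -- N = s1 * k1 + u * v
  have hNkey : N = s1 * k1 + u * v := by
    refine Nat.eq_of_mul_eq_mul_left hD0 ?_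
    have e1 : ds * dk * (s1 * k1 + u * v) = (ds * s1) * (dk * k1) + ds * dk * (u * v) := by
      ring
    rw [← hs1, ← hk1, hruv] at e1
    rw [hdsdkN, e1, ← hn]
  -- coprimality facts
  have hnds : n / ds = dk * N := by
    have h1 : ds * (dk * N) = n := by rw [← hdsdkN]; ring
    rw [← h1, Nat.mul_div_cancel_left _ hds0]
  have hndk : n / dk = ds * N := by
    have h1 : dk * (ds * N) = n := by rw [← hdsdkN]; ring
    rw [← h1, Nat.mul_div_cancel_left _ hdk0]
  have c1 : Nat.Coprime (dk * N) s1 := by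
    have := Nat.coprime_div_gcd_div_gcd (m := n) (n := s) hds0
    rwa [← hds, ← hs1def, hnds] at this
  have c2 : Nat.Coprime (ds * N) k1 := by
    have := Nat.coprime_div_gcd_div_gcd (m := n) (n := k) hdk0
    rwa [← hdk, ← hk1def, hndk] at this
  have cdsk1 : Nat.Coprime ds k1 := Nat.Coprime.coprime_dvd_left (Dvd.intro N rfl) c2
  have cNs1 : Nat.Coprime N s1 := Nat.Coprime.coprime_dvd_left (Dvd.intro_left dk rfl) c1
  have cNk1 : Nat.Coprime N k1 := Nat.Coprime.coprime_dvd_left (Dvd.intro_left ds rfl) c2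
  have cNv : Nat.Coprime N v := by
    have hg1 : Nat.gcd N v ∣ s1 * k1 := by
      have h1 : Nat.gcd N v ∣ N := Nat.gcd_dvd_left _ _
      have h2 : Nat.gcd N v ∣ u * v := (Nat.gcd_dvd_right _ _).mul_left u
      have h3 : N - u * v = s1 * k1 := Nat.sub_eq_of_eq_add hNkey
      rw [← h3]
      exact Nat.dvd_sub h1 h2
    have h4 : Nat.gcd N v ∣ Nat.gcd N (s1 * k1) :=
      Nat.dvd_gcd (Nat.gcd_dvd_left _ _) hg1
    have h5 : Nat.gcd N (s1 * k1) = 1 := cNs1.mul_right cNk1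
    rw [h5] at h4
    exact Nat.coprime_iff_gcd_eq_one.mpr (Nat.dvd_one.mp h4)
  -- the two maps
  set T := Fin N × Fin dk × Fin ds with hT
  set g : T → ZMod n := fun p =>
    ((((p.1 : ℕ) * dk + (p.2.1 : ℕ)) * s + ∑ i ∈ Finset.range (p.2.2 : ℕ), J.aSeq i : ℕ)
      : ZMod n) with hg
  set h : T → ZMod n := fun p =>
    (((p.2.2 : ℕ) * k : ℕ) : ZMod n)
      - ((∑ i ∈ Finset.range (p.2.1 : ℕ), J.bSeq i : ℕ) : ZMod n)
      - (((p.1 : ℕ) * σb : ℕ) : ZMod n) with hh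
  have ginj : Function.Injective g := by
    rintro ⟨⟨a, ha⟩, ⟨b, hb⟩, ⟨c, hc⟩⟩ ⟨⟨a', ha'⟩, ⟨b', hb'⟩, ⟨c', hc'⟩⟩ hgg
    obtain ⟨h1, h2, h3⟩ := inj_g (fun m => ∑ i ∈ Finset.range m, J.aSeq i)
      hn0 hdsdkN hs1 c1 J.ha_distinct ha ha' hb hb' hc hc' hgg
    subst h1; subst h2; subst h3; rfl
  have hinj : Function.Injective h := by
    rintro ⟨⟨a, ha⟩, ⟨b, hb⟩, ⟨c, hc⟩⟩ ⟨⟨a', ha'⟩, ⟨b', hb'⟩, ⟨c', hc'⟩⟩ hhh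
    obtain ⟨h1, h2, h3⟩ := inj_h (fun l => ∑ i ∈ Finset.range l, J.bSeq i)
      hn0 hdsdkN hk1 hσbv cdsk1 cNv J.hb_distinct ha ha' hb hb' hc hc' hhh
    subst h1; subst h2; subst h3; rfl
  have hcard : Fintype.card T = Fintype.card (ZMod n) := by
    simp only [hT, Fintype.card_prod, Fintype.card_fin, ZMod.card]
    rw [← hdsdkN]; ring
  have gbij : Function.Bijective g :=
    (Fintype.bijective_iff_injective_and_card g).mpr ⟨ginj, hcard⟩
  have hbij : Function.Bijective h :=
    (Fintype.bijective_iff_injective_and_card h).mpr ⟨hinj, hcard⟩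
  refine ⟨(Equiv.ofBijective g gbij).symm.trans (Equiv.ofBijective h hbij), ?_⟩
  intro α l m hα hl hm
  have key : ∀ p : T,
      ((Equiv.ofBijective g gbij).symm.trans (Equiv.ofBijective h hbij)) (g p) = h p := by
    intro p
    have e1 : (Equiv.ofBijective g gbij).symm (g p) = p :=
      (Equiv.ofBijective g gbij).symm_apply_apply p
    simp only [Equiv.trans_apply, e1]
    rfl
  exact key (⟨α, hα⟩, ⟨l, hl⟩, ⟨m, hm⟩)
end

section
/- Let u = (d_k s, -σ_b) and v = (σ_a, d_s k) in Z², where σ_a, σ_b come from an (s,k,n)-jumper (so d_sd_k | σ_a, d_sd_k | σ_b, σ_aσ_b = d_sd_k r, and n = sk + r). Then (n,0) = (k/d_k)u + (σ_b/(d_sd_k))v and (0,n) = -(σ_a/(d_sd_k))u + (s/d_s)v; in particular (n,0) and (0,n) lie in the lattice generated by u and v. -/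
/-- With `u = (d_k s, -σ_b)` and `v = (σ_a, d_s k)` coming from an
`(s,k,n)`-jumper (`d_s d_k ∣ σ_a`, `d_s d_k ∣ σ_b`, `σ_a σ_b = d_s d_k r`,
`n = sk + r`): `(n,0) = (k/d_k) u + (σ_b/(d_s d_k)) v`,
`(0,n) = -(σ_a/(d_s d_k)) u + (s/d_s) v`, and in particular `(n,0)` and
`(0,n)` lie in the lattice (additive subgroup) generated by `u` and `v`. -/
theorem stmt_18 (n s k r : ℕ) (hk : 0 < k) (hsp : 0 < s) (hr : 0 < r)
    (hn : n = s * k + r)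
    (σa σb : ℕ) (hσa : Nat.gcd n s * Nat.gcd n k ∣ σa)
    (hσb : Nat.gcd n s * Nat.gcd n k ∣ σb)
    (hprod : σa * σb = Nat.gcd n s * Nat.gcd n k * r)
    (u v : ℤ × ℤ)
    (hu : u = (((Nat.gcd n k * s : ℕ) : ℤ), -(σb : ℤ)))
    (hv : v = (((σa : ℕ) : ℤ), ((Nat.gcd n s * k : ℕ) : ℤ))) :
    (((n : ℤ), (0 : ℤ)) =
        ((k / Nat.gcd n k : ℕ) : ℤ) • u
          + ((σb / (Nat.gcd n s * Nat.gcd n k) : ℕ) : ℤ) • v) ∧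
    (((0 : ℤ), (n : ℤ)) =
        -(((σa / (Nat.gcd n s * Nat.gcd n k) : ℕ) : ℤ)) • u
          + ((s / Nat.gcd n s : ℕ) : ℤ) • v) ∧
    ((n : ℤ), (0 : ℤ)) ∈ AddSubgroup.closure ({u, v} : Set (ℤ × ℤ)) ∧
    ((0 : ℤ), (n : ℤ)) ∈ AddSubgroup.closure ({u, v} : Set (ℤ × ℤ)) := by
  set ds := Nat.gcd n s with hds
  set dk := Nat.gcd n k with hdk
  have hdsp : 0 < ds := Nat.gcd_pos_of_pos_right n hsp
  have hdkp : 0 < dk := Nat.gcd_pos_of_pos_right n hk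
  obtain ⟨a, ha⟩ := hσa
  obtain ⟨b, hb⟩ := hσb
  obtain ⟨k', hk'⟩ : dk ∣ k := Nat.gcd_dvd_right n k
  obtain ⟨s', hs'⟩ : ds ∣ s := Nat.gcd_dvd_right n s
  have hpos : 0 < ds * dk := Nat.mul_pos hdsp hdkp
  have hrab : r = ds * dk * (a * b) := by
    have := hprod
    rw [ha, hb] at this
    have h2 : ds * dk * (ds * dk * (a * b)) = ds * dk * r := by ring_nf; ring_nf at this; linarith
    exact (Nat.eq_of_mul_eq_mul_left hpos h2).symm
  have hda : σa / (ds * dk) = a := by rw [ha, Nat.mul_div_cancel_left _ hpos]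
  have hdb : σb / (ds * dk) = b := by rw [hb, Nat.mul_div_cancel_left _ hpos]
  have hdk' : k / dk = k' := by rw [hk', Nat.mul_div_cancel_left _ hdkp]
  have hds' : s / ds = s' := by rw [hs', Nat.mul_div_cancel_left _ hdsp]
  have e1 : ((n : ℤ), (0 : ℤ)) =
      ((k / dk : ℕ) : ℤ) • u + ((σb / (ds * dk) : ℕ) : ℤ) • v := by
    simp only [hda, hdb, hdk', hds']
    rw [hu, hv, Prod.smul_mk, Prod.smul_mk, Prod.mk_add_mk,
      Prod.mk.injEq]
    constructor <;> · push_cast [hn, ha, hb, hk', hs', hrab, smul_eq_mul]; ring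
  have e2 : ((0 : ℤ), (n : ℤ)) =
      -(((σa / (ds * dk) : ℕ) : ℤ)) • u + ((s / ds : ℕ) : ℤ) • v := by
    simp only [hda, hdb, hdk', hds']
    rw [hu, hv, Prod.smul_mk, Prod.smul_mk, Prod.mk_add_mk,
      Prod.mk.injEq]
    constructor <;> · push_cast [hn, ha, hb, hk', hs', hrab, smul_eq_mul]; ring
  have hum : u ∈ AddSubgroup.closure ({u, v} : Set (ℤ × ℤ)) :=
    AddSubgroup.subset_closure (Set.mem_insert _ _)
  have hvm : v ∈ AddSubgroup.closure ({u, v} : Set (ℤ × ℤ)) :=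
    AddSubgroup.subset_closure (Set.mem_insert_of_mem _ rfl)
  refine ⟨e1, e2, ?_, ?_⟩
  · rw [e1]; exact add_mem (zsmul_mem hum _) (zsmul_mem hvm _)
  · rw [e2]; exact add_mem (zsmul_mem hum _) (zsmul_mem hvm _)
end
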